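/- arXiv:2102.00770 — 2 statements merged into one kernel-verified Lean document; each statement's English description precedes it below -/
import Mathlib

section
/- Let e ≥ 2 and 0 < a < b ≤ c ≤ e, and let B be the block of e-weight 3 with notation ⟨3^a, 5^{b−a}, 4^{c−b}, 3^{e−c}⟩, which forms a [3:2]-pair via the residue j carried by runner a. Then the unique partition lying in B that is exceptional for this pair is ⟨a_{(1,1,1)}⟩. -/
/-- A partition: a weakly decreasing function `parts : ℕ → ℕ` (0-indexed),
having exactly `len` nonzero parts. -/
structure AbacusPartition where
  parts : ℕ → ℕ
  antitone : Antitone parts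
  len : ℕ
  pos_of_lt : ∀ i, i < len → 0 < parts i
  zero_of_ge : ∀ i, len ≤ i → parts i = 0

/-- The beta-set (abacus display) of a partition with `r` beads:
positions `λ_i + r - i` for `1 ≤ i ≤ r` (0-indexed: `parts i + (r - 1 - i)`). -/
def AbacusPartition.betaSet (lam : AbacusPartition) (r : ℕ) : Finset ℕ :=
  (Finset.range r).image (fun i => lam.parts i + (r - 1 - i))

/-- e-weight of the bead at position `p` of the display `B`: the number of
unoccupied positions `q < p` with `q ≡ p (mod e)`. -/
def beadWeight (e : ℕ) (B : Finset ℕ) (p : ℕ) : ℕ :=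
  ((Finset.range p).filter (fun q => q % e = p % e ∧ q ∉ B)).card

/-- Total e-weight of the display `B`. -/
def abacusWeight (e : ℕ) (B : Finset ℕ) : ℕ :=
  B.sum (fun p => beadWeight e B p)

/-- e-weight of a partition (computed from the display with `lam.len` beads). -/
def eWeight (e : ℕ) (lam : AbacusPartition) : ℕ :=
  abacusWeight e (lam.betaSet lam.len)

/-- Positions on runner `res` (positions `p` with `p % e = res`), in increasing
order, up to a bound strictly beyond every bead. -/
def posList (e : ℕ) (B : Finset ℕ) (res : ℕ) : List ℕ :=
  (List.range (B.sup id + e + 2)).filter (fun p => p % e == res)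

/-- One step of the signature-reduction automaton; the state is
`(list of surviving '+' positions, stack of pending '−' positions)`.
A '−' occurs at `p` when `p` is occupied and its preceding position unoccupied
(position `-1` counts as occupied); a '+' occurs at `p` when `p` is unoccupied
and its preceding position occupied.  A '+' cancels the most recent pending '−'. -/
def signStep (B : Finset ℕ) (st : List ℕ × List ℕ) (p : ℕ) : List ℕ × List ℕ :=
  if p ∈ B ∧ ¬(p = 0 ∨ p - 1 ∈ B) then (st.1, p :: st.2)
  else if p ∉ B ∧ (p = 0 ∨ p - 1 ∈ B) then
    (match st.2 with
     | [] => (p :: st.1, ([] : List ℕ))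
     | _ :: tl => (st.1, tl))
  else st

/-- Final state of the reduction of the `j`-signature on runner `res`:
`(surviving '+' (conormal) positions, surviving '−' (normal) positions)`,
each list in decreasing order of position. -/
def signState (e : ℕ) (B : Finset ℕ) (res : ℕ) : List ℕ × List ℕ :=
  (posList e B res).foldl (signStep B) ([], [])

/-- Positions of the normal beads on runner `res`, in decreasing order. -/
def normalList (e : ℕ) (B : Finset ℕ) (res : ℕ) : List ℕ := (signState e B res).2

/-- The conormal positions on runner `res`, in decreasing order. -/
def conormalList (e : ℕ) (B : Finset ℕ) (res : ℕ) : List ℕ := (signState e B res).1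

/-- ε: the number of normal beads on runner `res`. -/
def epsB (e : ℕ) (B : Finset ℕ) (res : ℕ) : ℕ := (normalList e B res).length

/-- φ: the number of conormal positions on runner `res`. -/
def phiB (e : ℕ) (B : Finset ℕ) (res : ℕ) : ℕ := (conormalList e B res).length

/-- ε_j of a partition: in the display with `lam.len` beads, residue `j`
is carried by runner `(j + lam.len) % e`. -/
def epsP (e : ℕ) (lam : AbacusPartition) (j : ℕ) : ℕ :=
  epsB e (lam.betaSet lam.len) ((j + lam.len) % e)

/-- φ_j of a partition. -/
def phiP (e : ℕ) (lam : AbacusPartition) (j : ℕ) : ℕ :=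
  phiB e (lam.betaSet lam.len) ((j + lam.len) % e)

/-- Move each bead in `ps` from its position `p` to `p - 1`. -/
def moveDown (B : Finset ℕ) (ps : List ℕ) : Finset ℕ :=
  ps.foldl (fun C p => insert (p - 1) (C.erase p)) B

/-- For each position `p` in `ps`, move the bead at `p - 1` to `p`. -/
def moveUp (B : Finset ℕ) (ps : List ℕ) : Finset ℕ :=
  ps.foldl (fun C p => insert p (C.erase (p - 1))) B

/-- Ẽ^t on displays: move the `t` normal beads at the smallest positions down. -/
def Etil (e : ℕ) (B : Finset ℕ) (res t : ℕ) : Finset ℕ :=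
  moveDown B ((normalList e B res).reverse.take t)

/-- F̃^t on displays: for the `t` largest conormal positions `p`,
move the bead at `p - 1` to `p`. -/
def Ftil (e : ℕ) (B : Finset ℕ) (res t : ℕ) : Finset ℕ :=
  moveUp B ((conormalList e B res).take t)

/-- Number of beads of `B` on runner `i`. -/
def runnerCount (e : ℕ) (B : Finset ℕ) (i : ℕ) : ℕ :=
  (B.filter (fun p => p % e = i)).card

/-- Sum of the e-weights of the beads of `B` on runner `i` (this is `|λ(i)|`). -/
def runnerWeight (e : ℕ) (B : Finset ℕ) (i : ℕ) : ℕ :=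
  (B.filter (fun p => p % e = i)).sum (beadWeight e B)

/-- The display of the e-core: slide every bead as far up its runner as possible. -/
def coreBeta (e : ℕ) (B : Finset ℕ) : Finset ℕ :=
  (Finset.range e).biUnion
    (fun i => (Finset.range (runnerCount e B i)).image (fun m => i + m * e))

/-- `lam` lies in the block with bead counts `bd 0, …, bd (e-1)` and e-weight `w`:
displayed with `r = bd 0 + ⋯ + bd (e-1)` beads it has `bd i` beads on runner `i`
and e-weight `w`. -/
def inBlock (e : ℕ) (bd : ℕ → ℕ) (w : ℕ) (lam : AbacusPartition) : Prop :=
  lam.len ≤ (Finset.range e).sum bd ∧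
  (∀ i < e, runnerCount e (lam.betaSet ((Finset.range e).sum bd)) i = bd i) ∧
  abacusWeight e (lam.betaSet ((Finset.range e).sum bd)) = w

/-- The single-runner beta-set of the partition with parts `ρ` and `c` beads. -/
def oneRunnerBeta (rho : List ℕ) (c : ℕ) : Finset ℕ :=
  (Finset.range c).image (fun t => rho.getD t 0 + (c - 1 - t))

/-- The display of the partition `⟨0_{lamOf 0}, …, (e−1)_{lamOf (e−1)} | bd 0, …, bd (e−1)⟩`. -/
def display (e : ℕ) (bd : ℕ → ℕ) (lamOf : ℕ → List ℕ) : Finset ℕ :=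
  (Finset.range e).biUnion
    (fun i => (oneRunnerBeta (lamOf i) (bd i)).image (fun m => i + m * e))

/-- The operator Ḟ at runner `res`: apply F̃^{φ} (valid when ε = 0 < φ). -/
def dotF (e : ℕ) (B : Finset ℕ) (res : ℕ) : Finset ℕ := Ftil e B res (phiB e B res)

/-- Apply a chain of Ḟ steps. -/
def chainFold (e : ℕ) : Finset ℕ → List ℕ → Finset ℕ
  | B, [] => B
  | B, i :: rest => chainFold e (dotF e B i) rest

/-- The chain of Ḟ steps is semisimple: at each step ε = 0 before, φ > 0 before,
and φ = 0 afterwards. -/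
def validChain (e : ℕ) : Finset ℕ → List ℕ → Prop
  | _, [] => True
  | B, i :: rest =>
      (epsB e B i = 0 ∧ 0 < phiB e B i ∧ phiB e (dotF e B i) i = 0) ∧
      validChain e (dotF e B i) rest

/-- `B` induces semisimply to `C` (displays with the same number of beads). -/
def InducesSS (e : ℕ) (B C : Finset ℕ) : Prop :=
  ∃ L : List ℕ, validChain e B L ∧ chainFold e B L = C

/-- Re-display a beta-set with `s` additional beads. -/
def shiftBeta (B : Finset ℕ) (s : ℕ) : Finset ℕ :=
  B.image (· + s) ∪ Finset.range s

/-- `B` induces semisimply to the partition displayed by `C` (where `C` may use a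
different number of beads). -/
def InducesToPartition (e : ℕ) (B C : Finset ℕ) : Prop :=
  ∃ D : Finset ℕ, InducesSS e B D ∧ shiftBeta D C.card = shiftBeta C D.card

/-- The block with bead counts `bd` and weight `w` is Rouquier:
for all `i < j < e`, `bd i − bd j ≥ w` or `bd j − bd i ≥ w − 1`. -/
def IsRouquier (e w : ℕ) (bd : ℕ → ℕ) : Prop :=
  ∀ i j, i < j → j < e → bd j + w ≤ bd i ∨ bd i + (w - 1) ≤ bd j

/-- `lam` is e-singular: it has `e` consecutive equal nonzero parts. -/
def ESingular (e : ℕ) (lam : AbacusPartition) : Prop :=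
  ∃ i, lam.parts i ≠ 0 ∧ ∀ m < e, lam.parts (i + m) = lam.parts i

/-- `lam` is e-regular. -/
def ERegular (e : ℕ) (lam : AbacusPartition) : Prop := ¬ ESingular e lam

/-- The induced e-sequence of the display `B`, as a multiset: each bead of
positive weight `w` at position `p` contributes `p, p−e, …, p−(w−1)e`. -/
def inducedSeq (e : ℕ) (B : Finset ℕ) : Multiset ℕ :=
  B.val.bind (fun p => (Multiset.range (beadWeight e B p)).map (fun m => p - m * e))

/-- The product order: `lam ≤_P mu` iff they have the same e-core and e-weight and
`s(mu)_r ≥ s(lam)_r` componentwise for all sufficiently large `r`. -/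
def ProdLE (e : ℕ) (lam mu : AbacusPartition) : Prop :=
  (∃ r, lam.len ≤ r ∧ mu.len ≤ r ∧
    coreBeta e (lam.betaSet r) = coreBeta e (mu.betaSet r)) ∧
  eWeight e lam = eWeight e mu ∧
  ∃ r0, ∀ r, r0 ≤ r →
    List.Forall₂ (· ≤ ·) ((inducedSeq e (lam.betaSet r)).sort (· ≤ ·))
      ((inducedSeq e (mu.betaSet r)).sort (· ≤ ·))


/-! ### Auxiliary lemmas -/

section Aux

lemma cnt_succ (P : ℕ → Prop) [DecidablePred P] (M : ℕ) :
    ((Finset.range (M+1)).filter P).card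
      = ((Finset.range M).filter P).card + (if P M then 1 else 0) := by
  rw [Finset.range_add_one, Finset.filter_insert]
  split
  · rw [Finset.card_insert_of_notMem (by simp)]
  · simp

lemma dclosed_eq_range (S : Finset ℕ) (h : ∀ m ∈ S, ∀ m', m' ≤ m → m' ∈ S) :
    S = Finset.range S.card := by
  have hsub : S ⊆ Finset.range S.card := by
    intro m hm
    rw [Finset.mem_range]
    have hss : Finset.range (m+1) ⊆ S := fun x hx =>
      h m hm x (by simpa [Nat.lt_succ_iff] using hx)
    have := Finset.card_le_card hss
    simpa using this
  exact Finset.eq_of_subset_of_card_le hsub (by simp)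

lemma exists_M (a e N : ℕ) (hae : a < e) : ∃ M : ℕ, ∀ m, m < M ↔ a + m * e < N := by
  refine ⟨(N + (e - 1 - a)) / e, fun m => ?_⟩
  have h1 : m < (N + (e - 1 - a)) / e ↔ (m+1) * e ≤ N + (e - 1 - a) := by
    rw [Nat.lt_iff_add_one_le, Nat.le_div_iff_mul_le (by omega : 0 < e)]
  rw [h1]
  have : (m+1) * e = m * e + e := by ring
  omega

lemma posList_eq (e : ℕ) (B : Finset ℕ) (a : ℕ) (hae : a < e) (M : ℕ)
    (hM : ∀ m, m < M ↔ a + m * e < B.sup id + e + 2) :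
    posList e B a = (List.range M).map (fun m => a + m * e) := by
  have he : 0 < e := lt_of_le_of_lt (Nat.zero_le a) hae
  refine (fun hp h1 h2 => List.Perm.eq_of_pairwise (le := (· < ·))
    (fun _ _ _ _ h h' => absurd h (Nat.lt_asymm h')) h1 h2 hp) ?_ ?_ ?_
  · rw [List.perm_ext_iff_of_nodup]
    · intro p
      simp only [posList, List.mem_filter, List.mem_range, List.mem_map, beq_iff_eq]
      constructor
      · rintro ⟨hp, hmod⟩
        refine ⟨p / e, ?_, ?_⟩
        · rw [hM]
          have h1 : e * (p / e) + p % e = p := Nat.div_add_mod p e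
          have h2 : p / e * e = e * (p / e) := Nat.mul_comm _ _
          omega
        · have h1 : e * (p / e) + p % e = p := Nat.div_add_mod p e
          have h2 : p / e * e = e * (p / e) := Nat.mul_comm _ _
          omega
      · rintro ⟨m, hm, rfl⟩
        refine ⟨(hM m).mp hm, ?_⟩
        simp [Nat.add_mul_mod_self_right, Nat.mod_eq_of_lt hae]
    · exact ((List.filter_sublist).nodup (List.nodup_range))
    · rw [List.nodup_map_iff_inj_on (List.nodup_range (n := M))]
      intro x _ y _ h
      have : x * e = y * e := by omega
      exact Nat.eq_of_mul_eq_mul_right he this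
  · exact List.Pairwise.sublist (List.filter_sublist) (List.pairwise_lt_range)
  · rw [List.pairwise_map]
    exact (List.pairwise_lt_range (n := M)).imp
      (fun h => Nat.add_lt_add_left (Nat.mul_lt_mul_of_pos_right h he) a)

lemma foldl_fixed {α β : Type} (f : β → α → β) (l : List α)
    (h : ∀ x ∈ l, ∀ s, f s x = s) : ∀ s, l.foldl f s = s := by
  induction l with
  | nil => intro s; rfl
  | cons x xs ih =>
    intro s
    rw [List.foldl_cons, h x (by simp)]
    exact ih (fun y hy s => h y (by simp [hy]) s) s

lemma auto_main (B : Finset ℕ) (a e : ℕ) (ha : 0 < a) (Sa Sa1 : Finset ℕ)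
    (pmem : ∀ m, (a + m * e ∈ B ↔ m ∈ Sa))
    (qmem : ∀ m, (a + m * e - 1 ∈ B ↔ m ∈ Sa1)) (M : ℕ)
    (hbal : ∀ j, j ≤ M →
      ((Finset.range j).filter (fun m => m ∈ Sa1 ∧ m ∉ Sa)).card ≤
      ((Finset.range j).filter (fun m => m ∈ Sa ∧ m ∉ Sa1)).card) :
    (((List.range M).map (fun m => a + m * e)).foldl (signStep B) ([], [])).1 = [] ∧
    (((List.range M).map (fun m => a + m * e)).foldl (signStep B) ([], [])).2.length +
      ((Finset.range M).filter (fun m => m ∈ Sa1 ∧ m ∉ Sa)).card =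
      ((Finset.range M).filter (fun m => m ∈ Sa ∧ m ∉ Sa1)).card := by
  induction M with
  | zero => simp
  | succ M ih =>
    have hbal' : ∀ j, j ≤ M →
      ((Finset.range j).filter (fun m => m ∈ Sa1 ∧ m ∉ Sa)).card ≤
      ((Finset.range j).filter (fun m => m ∈ Sa ∧ m ∉ Sa1)).card :=
      fun j hj => hbal j (le_trans hj (Nat.le_succ M))
    obtain ⟨ih1, ih2⟩ := ih hbal'
    rw [List.range_succ, List.map_append, List.foldl_append]
    set st := ((List.range M).map (fun m => a + m * e)).foldl (signStep B) ([], []) with hst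
    simp only [List.map_cons, List.map_nil, List.foldl_cons, List.foldl_nil]
    have hne : ¬ (a + M * e = 0) := by positivity
    have hp : (a + M * e ∈ B) = (M ∈ Sa) := propext (pmem M)
    have hq : (a + M * e - 1 ∈ B) = (M ∈ Sa1) := propext (qmem M)
    rw [cnt_succ, cnt_succ]
    by_cases h1 : M ∈ Sa <;> by_cases h2 : M ∈ Sa1
    · have hid : signStep B st (a + M * e) = st := by
        simp [signStep, hp, hq, h1, h2, hne]
      have c1 : (if (M ∈ Sa1 ∧ M ∉ Sa) then (1:ℕ) else 0) = 0 := if_neg (by tauto)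
      have c2 : (if (M ∈ Sa ∧ M ∉ Sa1) then (1:ℕ) else 0) = 0 := if_neg (by tauto)
      rw [hid, c1, c2]
      exact ⟨ih1, by omega⟩
    · have hid : signStep B st (a + M * e) = (st.1, (a + M * e) :: st.2) := by
        simp [signStep, hp, hq, h1, h2, hne, ha.ne']
      have c1 : (if (M ∈ Sa1 ∧ M ∉ Sa) then (1:ℕ) else 0) = 0 := if_neg (by tauto)
      have c2 : (if (M ∈ Sa ∧ M ∉ Sa1) then (1:ℕ) else 0) = 1 := if_pos ⟨h1, h2⟩
      rw [hid, c1, c2]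
      exact ⟨ih1, by simp only [List.length_cons]; omega⟩
    · have c1 : (if (M ∈ Sa1 ∧ M ∉ Sa) then (1:ℕ) else 0) = 1 := if_pos ⟨h2, h1⟩
      have c2 : (if (M ∈ Sa ∧ M ∉ Sa1) then (1:ℕ) else 0) = 0 := if_neg (by tauto)
      have hpos : 0 < st.2.length := by
        have hb := hbal (M+1) (le_refl _)
        rw [cnt_succ, cnt_succ, c1, c2] at hb
        omega
      obtain ⟨x, tl, hxtl⟩ : ∃ x tl, st.2 = x :: tl := by
        cases h : st.2 with
        | nil => rw [h] at hpos; simp at hpos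
        | cons x tl => exact ⟨x, tl, rfl⟩
      have hid : signStep B st (a + M * e) = (st.1, tl) := by
        simp [signStep, hp, hq, h1, h2, hne, hxtl]
      rw [hid, c1, c2]
      have hlen : st.2.length = tl.length + 1 := by rw [hxtl]; simp
      refine ⟨ih1, ?_⟩
      show tl.length + _ = _
      omega
    · have hid : signStep B st (a + M * e) = st := by
        simp [signStep, hp, hq, h1, h2, hne, ha.ne']
      have c1 : (if (M ∈ Sa1 ∧ M ∉ Sa) then (1:ℕ) else 0) = 0 := if_neg (by tauto)
      have c2 : (if (M ∈ Sa ∧ M ∉ Sa1) then (1:ℕ) else 0) = 0 := if_neg (by tauto)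
      rw [hid, c1, c2]
      exact ⟨ih1, by omega⟩

lemma auto_exc (B : Finset ℕ) (a e : ℕ) (ha : 0 < a)
    (pmem : ∀ m, (a + m * e ∈ B ↔ m ∈ ({0,1,3,4,5} : Finset ℕ)))
    (qmem : ∀ m, (a + m * e - 1 ∈ B ↔ m ∈ ({0,1,2} : Finset ℕ)))
    (M : ℕ) (hM : 6 ≤ M) :
    (((List.range M).map (fun m => a + m * e)).foldl (signStep B) ([], [])).2.length = 3 := by
  have hne : ∀ m : ℕ, ¬(a + m * e = 0) := fun m => by positivity
  have hsplit : List.range M = List.range 6 ++ (List.range M).drop 6 := by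
    conv_lhs => rw [← List.take_append_drop 6 (List.range M)]
    rw [List.take_range, Nat.min_eq_left hM]
  rw [hsplit, List.map_append, List.foldl_append]
  have h6 : (List.range 6) = [0,1,2,3,4,5] := by decide
  have p0 : a ∈ B := by have := (pmem 0).mpr (by decide); simpa using this
  have p1 : a + e ∈ B := by have := (pmem 1).mpr (by decide); simpa using this
  have p2 : a + 2 * e ∉ B := by
    intro h; have := (pmem 2).mp h; simp at this
  have p3 : a + 3 * e ∈ B := (pmem 3).mpr (by decide)
  have p4 : a + 4 * e ∈ B := (pmem 4).mpr (by decide)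
  have p5 : a + 5 * e ∈ B := (pmem 5).mpr (by decide)
  have q0 : a - 1 ∈ B := by have := (qmem 0).mpr (by decide); simpa using this
  have q1 : a + e - 1 ∈ B := by have := (qmem 1).mpr (by decide); simpa using this
  have q2 : a + 2 * e - 1 ∈ B := (qmem 2).mpr (by decide)
  have q3 : a + 3 * e - 1 ∉ B := by
    intro h; have := (qmem 3).mp h; simp at this
  have q4 : a + 4 * e - 1 ∉ B := by
    intro h; have := (qmem 4).mp h; simp at this
  have q5 : a + 5 * e - 1 ∉ B := by
    intro h; have := (qmem 5).mp h; simp at this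
  have hstep : ((List.range 6).map (fun m => a + m * e)).foldl (signStep B) ([], [])
      = ([a + 2 * e], [a + 5 * e, a + 4 * e, a + 3 * e]) := by
    rw [h6]
    simp only [List.map_cons, List.map_nil, List.foldl_cons, List.foldl_nil]
    simp [signStep, p0, p1, p2, p3, p4, p5, q0, q1, q2, q3, q4, q5, ha.ne']
  rw [hstep]
  have hfix : ∀ x ∈ ((List.range M).drop 6).map (fun m => a + m * e),
      ∀ s, signStep B s x = s := by
    intro x hx s
    rw [List.mem_map] at hx
    obtain ⟨m, hm, rfl⟩ := hx
    have hm6 : 6 ≤ m := by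
      rw [List.mem_iff_getElem] at hm
      obtain ⟨i, hi, hg⟩ := hm
      rw [List.getElem_drop, List.getElem_range] at hg
      omega
    rw [signStep, if_neg, if_neg]
    · rintro ⟨-, (h | h)⟩
      · exact hne m h
      · have := (qmem m).mp h; simp at this; omega
    · rintro ⟨h, -⟩
      have := (pmem m).mp h; simp at this; omega
  rw [foldl_fixed _ _ hfix]
  rfl

lemma oneRunnerBeta_nil (c : ℕ) : oneRunnerBeta [] c = Finset.range c := by
  ext x
  simp only [oneRunnerBeta, Finset.mem_image, Finset.mem_range, List.getD_nil]
  constructor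
  · rintro ⟨t, ht, rfl⟩; omega
  · intro hx; exact ⟨c - 1 - x, by omega, by omega⟩

lemma oneRunnerBeta_111 : oneRunnerBeta [1,1,1] 5 = ({0,1,3,4,5} : Finset ℕ) := by decide

lemma mem_display (e : ℕ) (bd : ℕ → ℕ) (lamOf : ℕ → List ℕ) (i m : ℕ) (hie : i < e) :
    (i + m * e ∈ display e bd lamOf) ↔ m ∈ oneRunnerBeta (lamOf i) (bd i) := by
  have he : 0 < e := lt_of_le_of_lt (Nat.zero_le i) hie
  simp only [display, Finset.mem_biUnion, Finset.mem_image, Finset.mem_range]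
  constructor
  · rintro ⟨i', hi', y, hy, heq⟩
    have h1 : (i' + y * e) % e = i' := by
      simp [Nat.add_mul_mod_self_right, Nat.mod_eq_of_lt hi']
    have h2 : (i + m * e) % e = i := by
      simp [Nat.add_mul_mod_self_right, Nat.mod_eq_of_lt hie]
    have hii : i' = i := by rw [heq] at h1; rw [h1] at h2; exact h2
    subst hii
    have : y = m := by
      have : y * e = m * e := by omega
      exact Nat.eq_of_mul_eq_mul_right he this
    subst this; exact hy
  · intro hm
    exact ⟨i, hie, m, hm, rfl⟩

/-- The set of rows occupied on runner `i`. -/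
def rowSet (e : ℕ) (B : Finset ℕ) (i : ℕ) : Finset ℕ :=
  (B.filter (fun p => p % e = i)).image (fun p => p / e)

lemma mem_rowSet (e : ℕ) (B : Finset ℕ) (i m : ℕ) (hie : i < e) :
    m ∈ rowSet e B i ↔ i + m * e ∈ B := by
  have he : 0 < e := lt_of_le_of_lt (Nat.zero_le i) hie
  simp only [rowSet, Finset.mem_image, Finset.mem_filter]
  constructor
  · rintro ⟨p, ⟨hpB, hpm⟩, rfl⟩
    have h1 : e * (p / e) + p % e = p := Nat.div_add_mod p e
    have h2 : p / e * e = e * (p / e) := Nat.mul_comm _ _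
    have : i + p / e * e = p := by omega
    rwa [this]
  · intro hm
    refine ⟨i + m * e, ⟨hm, ?_⟩, ?_⟩
    · simp [Nat.add_mul_mod_self_right, Nat.mod_eq_of_lt hie]
    · rw [Nat.add_mul_div_right _ _ he, Nat.div_eq_of_lt hie, Nat.zero_add]

lemma card_rowSet (e : ℕ) (B : Finset ℕ) (i : ℕ) :
    (rowSet e B i).card = runnerCount e B i := by
  rw [rowSet, runnerCount, Finset.card_image_of_injOn]
  intro p hp q hq hpq
  simp only [Finset.mem_coe, Finset.mem_filter] at hp hq
  obtain ⟨-, hp2⟩ := hp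
  obtain ⟨-, hq2⟩ := hq
  have h3 : p / e = q / e := by simpa using hpq
  have h1 : e * (p / e) + p % e = p := Nat.div_add_mod p e
  have h2 : e * (q / e) + q % e = q := Nat.div_add_mod q e
  rw [← h3] at h2
  clear hpq
  omega

lemma beadWeight_row (e : ℕ) (B : Finset ℕ) (i m : ℕ) (hie : i < e) :
    beadWeight e B (i + m * e)
      = ((Finset.range m).filter (fun m' => m' ∉ rowSet e B i)).card := by
  have he : 0 < e := lt_of_le_of_lt (Nat.zero_le i) hie
  have hmod : (i + m * e) % e = i := by
    simp [Nat.add_mul_mod_self_right, Nat.mod_eq_of_lt hie]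
  rw [beadWeight, hmod]
  rw [show ((Finset.range (i + m * e)).filter (fun q => q % e = i ∧ q ∉ B))
      = ((Finset.range m).filter (fun m' => m' ∉ rowSet e B i)).image
          (fun m' => i + m' * e) from ?_]
  · rw [Finset.card_image_of_injective]
    intro x y hxy
    simp only at hxy
    have hx : x * e = y * e := by omega
    exact Nat.eq_of_mul_eq_mul_right he hx
  · ext q
    simp only [Finset.mem_filter, Finset.mem_range, Finset.mem_image]
    constructor
    · rintro ⟨hq, hqm, hqB⟩
      refine ⟨q / e, ⟨?_, ?_⟩, ?_⟩
      · have h1 : e * (q / e) + q % e = q := Nat.div_add_mod q e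
        have hc : m * e = e * m := Nat.mul_comm _ _
        have hlt : e * (q / e) < e * m := by omega
        exact Nat.lt_of_mul_lt_mul_left hlt
      · rw [mem_rowSet e B i _ hie]
        have h1 : e * (q / e) + q % e = q := Nat.div_add_mod q e
        have h2 : q / e * e = e * (q / e) := Nat.mul_comm _ _
        have : i + q / e * e = q := by omega
        rwa [this]
      · have h1 : e * (q / e) + q % e = q := Nat.div_add_mod q e
        have h2 : q / e * e = e * (q / e) := Nat.mul_comm _ _
        omega
    · rintro ⟨m', ⟨hm', hm'S⟩, rfl⟩
      rw [mem_rowSet e B i _ hie] at hm'S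
      refine ⟨?_, ?_, hm'S⟩
      · have : m' * e < m * e := Nat.mul_lt_mul_of_pos_right hm' he
        omega
      · simp [Nat.add_mul_mod_self_right, Nat.mod_eq_of_lt hie]

lemma runnerWeight_row (e : ℕ) (B : Finset ℕ) (i : ℕ) (hie : i < e) :
    runnerWeight e B i
      = ∑ m ∈ rowSet e B i,
          ((Finset.range m).filter (fun m' => m' ∉ rowSet e B i)).card := by
  rw [rowSet, Finset.sum_image (g := fun p => p / e)
    (by
      intro p hp q hq hpq
      simp only [Finset.mem_coe, Finset.mem_filter] at hp hq
      obtain ⟨-, hp2⟩ := hp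
      obtain ⟨-, hq2⟩ := hq
      have h3 : p / e = q / e := by simpa using hpq
      have h1 : e * (p / e) + p % e = p := Nat.div_add_mod p e
      have h2 : e * (q / e) + q % e = q := Nat.div_add_mod q e
      rw [← h3] at h2
      clear hpq
      omega)]
  rw [runnerWeight]
  apply Finset.sum_congr rfl
  intro p hp
  simp only [Finset.mem_filter] at hp
  have h1 : e * (p / e) + p % e = p := Nat.div_add_mod p e
  have h2 : p / e * e = e * (p / e) := Nat.mul_comm _ _
  have hpe : i + (p / e) * e = p := by omega
  conv_lhs => rw [← hpe]
  rw [beadWeight_row e B i _ hie]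
  rfl

lemma abacusWeight_fiber (e : ℕ) (B : Finset ℕ) (he : 0 < e) :
    abacusWeight e B = ∑ i ∈ Finset.range e, runnerWeight e B i := by
  rw [abacusWeight]
  rw [← Finset.sum_fiberwise_of_maps_to (g := fun p => p % e) (t := Finset.range e)
    (fun p _ => Finset.mem_range.mpr (Nat.mod_lt p he))]
  rfl

lemma claim3 (S : Finset ℕ)
    (h0 : ∑ m ∈ S, ((Finset.range m).filter (fun m' => m' ∉ S)).card = 0) :
    S = Finset.range S.card := by
  apply dclosed_eq_range
  intro m hm m' hm'
  rcases Nat.eq_or_lt_of_le hm' with rfl | hlt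
  · exact hm
  by_contra hnot
  have h1 : ((Finset.range m).filter (fun x => x ∉ S)).card = 0 :=
    (Finset.sum_eq_zero_iff.mp h0) m hm
  rw [Finset.card_eq_zero] at h1
  have : m' ∈ (Finset.range m).filter (fun x => x ∉ S) := by
    simp [Finset.mem_filter, Finset.mem_range, hlt, hnot]
  rw [h1] at this
  simp at this

lemma claim1 (S : Finset ℕ) (hcard : S.card = 5) (k : ℕ) (hk : k < 3) (hkS : k ∉ S) :
    5 - k ≤ ∑ m ∈ S, ((Finset.range m).filter (fun m' => m' ∉ S)).card := by
  set U := S.filter (fun m => k < m) with hU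
  have hUcard : 5 - k ≤ U.card := by
    have hsplit := Finset.card_filter_add_card_filter_not
      (s := S) (p := fun m => k < m)
    rw [← hU] at hsplit
    have hle : (S.filter (fun m => ¬ k < m)).card ≤ k := by
      have hsub : S.filter (fun m => ¬ k < m) ⊆ Finset.range k := by
        intro x hx
        simp only [Finset.mem_filter, not_lt] at hx
        rw [Finset.mem_range]
        rcases Nat.eq_or_lt_of_le hx.2 with rfl | hlt
        · exact absurd hx.1 hkS
        · exact hlt
      simpa using Finset.card_le_card hsub
    omega
  calc 5 - k ≤ U.card := hUcard
    _ = ∑ _m ∈ U, 1 := by simp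
    _ ≤ ∑ m ∈ U, ((Finset.range m).filter (fun m' => m' ∉ S)).card := by
        apply Finset.sum_le_sum
        intro m hm
        simp only [hU, Finset.mem_filter] at hm
        have : k ∈ (Finset.range m).filter (fun m' => m' ∉ S) := by
          simp [Finset.mem_range, hm.2, hkS]
        exact Finset.card_pos.mpr ⟨k, this⟩
    _ ≤ ∑ m ∈ S, ((Finset.range m).filter (fun m' => m' ∉ S)).card :=
        Finset.sum_le_sum_of_subset (Finset.filter_subset _ _)

lemma claim4 (S : Finset ℕ) (hcard : S.card = 5) (h0 : 0 ∈ S) (h1 : 1 ∈ S) (h2 : 2 ∉ S)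
    (hw : ∑ m ∈ S, ((Finset.range m).filter (fun m' => m' ∉ S)).card = 3) :
    S = ({0,1,3,4,5} : Finset ℕ) := by
  set g := fun m => ((Finset.range m).filter (fun m' => m' ∉ S)).card with hg
  set T := S.filter (fun m => 2 ≤ m) with hT
  have hTlow : S.filter (fun m => ¬ 2 ≤ m) = ({0, 1} : Finset ℕ) := by
    ext x
    simp only [Finset.mem_filter, not_le, Finset.mem_insert, Finset.mem_singleton]
    constructor
    · rintro ⟨hxS, hx2⟩; omega
    · rintro (rfl | rfl) <;> simp [h0, h1]
  have hT3 : T.card = 3 := by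
    have hsplit := Finset.card_filter_add_card_filter_not
      (s := S) (p := fun m => 2 ≤ m)
    rw [hTlow, ← hT] at hsplit
    have : ({0,1} : Finset ℕ).card = 2 := by decide
    omega
  have hTge : ∀ m ∈ T, 3 ≤ m := by
    intro m hm
    simp only [hT, Finset.mem_filter] at hm
    rcases Nat.eq_or_lt_of_le hm.2 with rfl | hlt
    · exact absurd hm.1 h2
    · omega
  have hg1 : ∀ m ∈ T, 1 ≤ g m := by
    intro m hm
    have hm3 := hTge m hm
    have : (2:ℕ) ∈ (Finset.range m).filter (fun m' => m' ∉ S) := by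
      simp [Finset.mem_range, h2]; omega
    exact Finset.card_pos.mpr ⟨2, this⟩
  have hTsum : ∑ m ∈ T, g m = 3 := by
    have hsplit := Finset.sum_filter_add_sum_filter_not S (fun m => 2 ≤ m) g
    rw [hTlow] at hsplit
    have hlow : ∑ m ∈ ({0,1} : Finset ℕ), g m = 0 := by
      have hg0 : g 0 = 0 := by simp [hg]
      have hg1' : g 1 = 0 := by
        simp only [hg]
        rw [Finset.card_eq_zero, Finset.filter_eq_empty_iff]
        intro x hx
        simp only [Finset.mem_range] at hx
        interval_cases x
        simp [h0]
      rw [Finset.sum_insert (by decide), Finset.sum_singleton, hg0, hg1']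
    rw [← hT, hw] at hsplit
    omega
  have hgall : ∀ m ∈ T, g m = 1 := by
    by_contra hc
    push_neg at hc
    obtain ⟨m0, hm0T, hm0⟩ := hc
    have h2le : 2 ≤ g m0 := by have := hg1 m0 hm0T; omega
    have : ∑ m ∈ T, (fun _ => 1) m < ∑ m ∈ T, g m :=
      Finset.sum_lt_sum (fun i hi => hg1 i hi) ⟨m0, hm0T, by omega⟩
    simp only [Finset.sum_const, smul_eq_mul, mul_one] at this
    omega
  have hTsub : T ⊆ ({3,4,5} : Finset ℕ) := by
    intro m hm
    have hm3 := hTge m hm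
    have hm5 : m ≤ 5 := by
      have hgm := hgall m hm
      have hfilt : (Finset.range m).filter (fun m' => m' ∈ S) ⊆ S.erase m := by
        intro x hx
        simp only [Finset.mem_filter, Finset.mem_range] at hx
        exact Finset.mem_erase.mpr ⟨by omega, hx.2⟩
      have hle4 : ((Finset.range m).filter (fun m' => m' ∈ S)).card ≤ 4 := by
        have := Finset.card_le_card hfilt
        rw [Finset.card_erase_of_mem (Finset.mem_filter.mp (by
          simpa [hT] using hm)).1] at this
        omega
      have hsplit := Finset.card_filter_add_card_filter_not
        (s := Finset.range m) (p := fun m' => m' ∈ S)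
      simp only [Finset.card_range] at hsplit
      simp only [hg] at hgm
      omega
    simp only [Finset.mem_insert, Finset.mem_singleton]
    omega
  have hTeq : T = ({3,4,5} : Finset ℕ) :=
    Finset.eq_of_subset_of_card_le hTsub (by rw [hT3]; decide)
  have hSu : S = S.filter (fun m => 2 ≤ m) ∪ S.filter (fun m => ¬ 2 ≤ m) :=
    (Finset.filter_union_filter_not_eq _ S).symm
  rw [hTlow, ← hT, hTeq] at hSu
  rw [hSu]
  decide

lemma bal_of_sub (Sa Sa1 : Finset ℕ) (hsub : ({0,1,2} : Finset ℕ) ⊆ Sa)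
    (hcard : Sa1.card = 3) (j : ℕ) :
    ((Finset.range j).filter (fun m => m ∈ Sa1 ∧ m ∉ Sa)).card ≤
    ((Finset.range j).filter (fun m => m ∈ Sa ∧ m ∉ Sa1)).card := by
  by_cases hj : j ≤ 3
  · have : (Finset.range j).filter (fun m => m ∈ Sa1 ∧ m ∉ Sa) = ∅ := by
      rw [Finset.filter_eq_empty_iff]
      intro x hx
      rw [Finset.mem_range] at hx
      rintro ⟨-, hxa⟩
      exact hxa (hsub (by simp only [Finset.mem_insert, Finset.mem_singleton]; omega))
    rw [this]
    simp
  · push_neg at hj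
    have hplus : ((Finset.range j).filter (fun m => m ∈ Sa1 ∧ m ∉ Sa)).card
        ≤ (Sa1 \ ({0,1,2} : Finset ℕ)).card := by
      apply Finset.card_le_card
      intro x hx
      simp only [Finset.mem_filter, Finset.mem_range] at hx
      rw [Finset.mem_sdiff]
      exact ⟨hx.2.1, fun hc => hx.2.2 (hsub hc)⟩
    have hminus : (({0,1,2} : Finset ℕ) \ Sa1).card
        ≤ ((Finset.range j).filter (fun m => m ∈ Sa ∧ m ∉ Sa1)).card := by
      apply Finset.card_le_card
      intro x hx
      rw [Finset.mem_sdiff] at hx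
      simp only [Finset.mem_filter, Finset.mem_range]
      have hx3 : x < 3 := by
        have := hx.1
        simp only [Finset.mem_insert, Finset.mem_singleton] at this
        omega
      exact ⟨by omega, hsub hx.1, hx.2⟩
    have h1 : (Sa1 \ ({0,1,2} : Finset ℕ)).card + (Sa1 ∩ ({0,1,2} : Finset ℕ)).card
        = Sa1.card := Finset.card_sdiff_add_card_inter _ _
    have h2 : (({0,1,2} : Finset ℕ) \ Sa1).card + (({0,1,2} : Finset ℕ) ∩ Sa1).card
        = ({0,1,2} : Finset ℕ).card := Finset.card_sdiff_add_card_inter _ _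
    have h3 : (({0,1,2} : Finset ℕ) ∩ Sa1).card = (Sa1 ∩ ({0,1,2} : Finset ℕ)).card := by
      rw [Finset.inter_comm]
    have h4 : ({0,1,2} : Finset ℕ).card = 3 := by decide
    omega

end Aux

/-- the unique exceptional partition for the `[3:2]`-pair formed by
the block `⟨3^a, 5^{b−a}, 4^{c−b}, 3^{e−c}⟩` via the residue carried by runner `a`
is `⟨a_{(1,1,1)}⟩`. -/
theorem stmt8 (e a b c : ℕ) (he : 2 ≤ e) (ha : 0 < a) (hab : a < b) (hbc : b ≤ c)
    (hce : c ≤ e) (bd : ℕ → ℕ)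
    (hbd : bd = fun i => if i < a then 3 else if i < b then 5 else if i < c then 4 else 3)
    (r : ℕ) (hr : r = (Finset.range e).sum bd)
    (lam : AbacusPartition) (hlam : inBlock e bd 3 lam)
    (B : Finset ℕ) (hB : B = lam.betaSet r) :
    3 ≤ epsB e B a ↔ B = display e bd (fun m => if m = a then [1, 1, 1] else []) := by
  have hae : a < e := by omega
  have he0 : 0 < e := by omega
  have hBeq : lam.betaSet ((Finset.range e).sum bd) = B := by rw [hB, hr]
  obtain ⟨-, hcount, hwt⟩ := hlam
  rw [hBeq] at hcount hwt
  have hbda : bd a = 5 := by simp [hbd, hab]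
  have hbda1 : bd (a-1) = 3 := by
    have halt : a - 1 < a := by omega
    simp [hbd, halt]
  have ha1e : a - 1 < e := by omega
  have hSa5 : (rowSet e B a).card = 5 := by rw [card_rowSet, hcount a hae, hbda]
  have hSa13 : (rowSet e B (a-1)).card = 3 := by
    rw [card_rowSet, hcount (a-1) ha1e, hbda1]
  have pmem : ∀ m, (a + m * e ∈ B ↔ m ∈ rowSet e B a) :=
    fun m => (mem_rowSet e B a m hae).symm
  have qmem : ∀ m, (a + m * e - 1 ∈ B ↔ m ∈ rowSet e B (a-1)) := by
    intro m
    have h : a + m * e - 1 = (a - 1) + m * e := by omega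
    rw [h]
    exact (mem_rowSet e B (a-1) m ha1e).symm
  obtain ⟨M, hM⟩ := exists_M a e (B.sup id + e + 2) hae
  have hposl : posList e B a = (List.range M).map (fun m => a + m * e) :=
    posList_eq e B a hae M hM
  have heps : epsB e B a
      = (((List.range M).map (fun m => a + m * e)).foldl (signStep B) ([], [])).2.length := by
    unfold epsB normalList signState
    rw [hposl]
  have hrowlt : ∀ m, a + m * e ∈ B → m < M := by
    intro m hm
    rw [hM]
    have := Finset.le_sup (f := id) hm
    simp only [id_eq] at this
    omega
  by_cases hsub : ({0,1,2} : Finset ℕ) ⊆ rowSet e B a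
  · -- non-exceptional case: ε = 2
    obtain ⟨hc1, hc2⟩ := auto_main B a e ha (rowSet e B a) (rowSet e B (a-1)) pmem qmem M
      (fun j _ => bal_of_sub _ _ hsub hSa13 j)
    have hfm : (Finset.range M).filter (fun m => m ∈ rowSet e B a ∧ m ∉ rowSet e B (a-1))
        = rowSet e B a \ rowSet e B (a-1) := by
      ext x
      simp only [Finset.mem_filter, Finset.mem_range, Finset.mem_sdiff]
      constructor
      · tauto
      · intro hx
        exact ⟨hrowlt x ((pmem x).mpr hx.1), hx⟩
    have hfp : (Finset.range M).filter (fun m => m ∈ rowSet e B (a-1) ∧ m ∉ rowSet e B a)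
        = rowSet e B (a-1) \ rowSet e B a := by
      ext x
      simp only [Finset.mem_filter, Finset.mem_range, Finset.mem_sdiff]
      constructor
      · tauto
      · intro hx
        refine ⟨?_, hx⟩
        have hxB : a + x * e - 1 ∈ B := (qmem x).mpr hx.1
        have hs := Finset.le_sup (f := id) hxB
        simp only [id_eq] at hs
        rw [hM]
        omega
    rw [hfm, hfp] at hc2
    have hd1 : (rowSet e B a \ rowSet e B (a-1)).card
        + (rowSet e B a ∩ rowSet e B (a-1)).card = 5 := by
      rw [Finset.card_sdiff_add_card_inter, hSa5]
    have hd2 : (rowSet e B (a-1) \ rowSet e B a).card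
        + (rowSet e B (a-1) ∩ rowSet e B a).card = 3 := by
      rw [Finset.card_sdiff_add_card_inter, hSa13]
    have hd3 : (rowSet e B a ∩ rowSet e B (a-1)).card
        = (rowSet e B (a-1) ∩ rowSet e B a).card := by rw [Finset.inter_comm]
    have heps2 : epsB e B a = 2 := by rw [heps]; omega
    constructor
    · intro h
      rw [heps2] at h
      omega
    · intro hdisp
      exfalso
      have h2B : a + 2 * e ∈ B :=
        (pmem 2).mpr (hsub (by decide : (2:ℕ) ∈ ({0,1,2} : Finset ℕ)))
      rw [hdisp, mem_display e bd _ a 2 hae] at h2B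
      revert h2B
      simp [hbda, oneRunnerBeta_111]
  · -- exceptional case
    have hWle : runnerWeight e B a ≤ 3 := by
      have hW := abacusWeight_fiber e B he0
      rw [hwt] at hW
      have h1 : runnerWeight e B a ≤ ∑ i ∈ Finset.range e, runnerWeight e B i :=
        Finset.single_le_sum (f := fun i => runnerWeight e B i)
          (fun i _ => Nat.zero_le _) (Finset.mem_range.mpr hae)
      omega
    have hWrow := runnerWeight_row e B a hae
    have hWle' : ∑ m ∈ rowSet e B a,
        ((Finset.range m).filter (fun m' => m' ∉ rowSet e B a)).card ≤ 3 := by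
      rw [← hWrow]; exact hWle
    have h0S : 0 ∈ rowSet e B a := by
      by_contra h0
      have := claim1 (rowSet e B a) hSa5 0 (by omega) h0
      omega
    have h1S : 1 ∈ rowSet e B a := by
      by_contra h1
      have := claim1 (rowSet e B a) hSa5 1 (by omega) h1
      omega
    have h2S : 2 ∉ rowSet e B a := by
      intro h2
      apply hsub
      intro x hx
      simp only [Finset.mem_insert, Finset.mem_singleton] at hx
      rcases hx with rfl | rfl | rfl
      · exact h0S
      · exact h1S
      · exact h2
    have hW3 : ∑ m ∈ rowSet e B a,
        ((Finset.range m).filter (fun m' => m' ∉ rowSet e B a)).card = 3 := by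
      have := claim1 (rowSet e B a) hSa5 2 (by omega) h2S
      omega
    have hSaeq : rowSet e B a = ({0,1,3,4,5} : Finset ℕ) :=
      claim4 _ hSa5 h0S h1S h2S hW3
    have hWa : runnerWeight e B a = 3 := by rw [hWrow]; exact hW3
    have hothers : ∀ i, i < e → i ≠ a → runnerWeight e B i = 0 := by
      have hW := abacusWeight_fiber e B he0
      rw [hwt] at hW
      have hsp : runnerWeight e B a + ∑ x ∈ (Finset.range e).erase a, runnerWeight e B x
          = ∑ x ∈ Finset.range e, runnerWeight e B x :=
        Finset.add_sum_erase _ _ (Finset.mem_range.mpr hae)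
      intro i hie hia
      have hzero : ∑ x ∈ (Finset.range e).erase a, runnerWeight e B x = 0 := by omega
      exact Finset.sum_eq_zero_iff.mp hzero i
        (Finset.mem_erase.mpr ⟨hia, Finset.mem_range.mpr hie⟩)
    have hSi : ∀ i, i < e → i ≠ a → rowSet e B i = Finset.range (bd i) := by
      intro i hie hia
      have h0 : ∑ m ∈ rowSet e B i,
          ((Finset.range m).filter (fun m' => m' ∉ rowSet e B i)).card = 0 := by
        rw [← runnerWeight_row e B i hie]
        exact hothers i hie hia
      have hcl := claim3 _ h0
      rw [card_rowSet, hcount i hie] at hcl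
      exact hcl
    have hSa1eq : rowSet e B (a-1) = ({0,1,2} : Finset ℕ) := by
      have := hSi (a-1) ha1e (by omega)
      rw [hbda1] at this
      rw [this]
      decide
    have hdisp : B = display e bd (fun m => if m = a then [1,1,1] else []) := by
      ext p
      have hi : p % e < e := Nat.mod_lt _ he0
      have hsplitp : p % e + p / e * e = p := Nat.mod_add_div' p e
      conv_lhs => rw [← hsplitp]
      conv_rhs => rw [← hsplitp]
      rw [← mem_rowSet e B (p % e) (p / e) hi,
        mem_display e bd _ (p % e) (p / e) hi]
      by_cases hpa : p % e = a
      · rw [hpa, hSaeq]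
        simp [hbda, oneRunnerBeta_111]
      · rw [hSi (p % e) hi hpa]
        simp [if_neg hpa, oneRunnerBeta_nil]
    have hM6 : 6 ≤ M := by
      have h5 : a + 5 * e ∈ B := (pmem 5).mpr (by rw [hSaeq]; decide)
      have := hrowlt 5 h5
      omega
    have heps3 : epsB e B a = 3 := by
      rw [heps]
      exact auto_exc B a e ha
        (fun m => (pmem m).trans (by rw [hSaeq]))
        (fun m => (qmem m).trans (by rw [hSa1eq])) M hM6
    exact ⟨fun _ => hdisp, fun _ => by omega⟩
end

section
/- Let e ≥ 2 and 0 < a < b ≤ e, and let B be the block of e-weight 4 with notation ⟨4^a, 5^{b−a}, 4^{e−b}⟩, which forms a [4:1]-pair via the residue j carried by runner a. The partitions lying in B that are exceptional for this pair are exactly: ⟨a_{(3,1)}⟩; ⟨a_{(2,2)}⟩; ⟨a_{(2,1,1)}⟩; ⟨a_{(2,1)}, i_{(1)}⟩ for i ∉ {a−1, a} (possible only when e ≥ 3); ⟨a_{(1,1)}, i_{(2)}⟩ for i ∉ {a−1, a} (e ≥ 3); ⟨a_{(1,1)}, i_{(1)}, j'_{(1)}⟩ for i < j' with i, j' ∉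 {a−1, a} (e ≥ 4); ⟨a_{(1,1,1)}, i_{(1)}⟩ for i ≠ a; ⟨a_{(1,1)}, i_{(1,1)}⟩ for i ∉ {a−1, a} (e ≥ 3); and ⟨a_{(1,1,1,1)}⟩. -/
/-! ### Auxiliary infrastructure for stmt11 -/

namespace Stmt11

/-- Row set of `B` on runner `i`. -/
def SOf (e : ℕ) (B : Finset ℕ) (i : ℕ) : Finset ℕ :=
  (B.filter (fun p => p % e = i)).image (· / e)

/-- Gap weight of a single-runner row set. -/
def gw (S : Finset ℕ) : ℕ :=
  S.sum (fun m => ((Finset.range m).filter (fun m' => m' ∉ S)).card)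

/-- Abstract signature automaton on `(plus count, minus stack height)`. -/
def absStep (S4 S5 : Finset ℕ) (st : ℕ × ℕ) (m : ℕ) : ℕ × ℕ :=
  if m ∈ S5 ∧ ¬ m ∈ S4 then (st.1, st.2 + 1)
  else if ¬ m ∈ S5 ∧ m ∈ S4 then
    (match st.2 with
     | 0 => (st.1 + 1, 0)
     | Nat.succ n => (st.1, n))
  else st

def eps9 (S4 S5 : Finset ℕ) : ℕ := ((List.range 9).foldl (absStep S4 S5) (0, 0)).2

lemma mem_SOf {e i : ℕ} (hi : i < e) (B : Finset ℕ) (m : ℕ) :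
    m ∈ SOf e B i ↔ i + m * e ∈ B := by
  simp only [SOf, Finset.mem_image, Finset.mem_filter]
  constructor
  · rintro ⟨q, ⟨hq, hqi⟩, rfl⟩
    have hqq : i + q / e * e = q := by rw [← hqi]; exact Nat.mod_add_div' q e
    rwa [hqq]
  · intro h
    refine ⟨i + m * e, ⟨h, ?_⟩, ?_⟩
    · rw [Nat.add_mul_mod_self_right, Nat.mod_eq_of_lt hi]
    · rw [Nat.add_mul_div_right _ _ (by omega : 0 < e), Nat.div_eq_of_lt hi, Nat.zero_add]

lemma mem_iff_div_mem {e : ℕ} (he : 0 < e) (B : Finset ℕ) (p : ℕ) :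
    p ∈ B ↔ p / e ∈ SOf e B (p % e) := by
  rw [mem_SOf (Nat.mod_lt _ he), Nat.mod_add_div']

lemma eq_of_SOf_eq {e : ℕ} (he : 0 < e) {B C : Finset ℕ}
    (h : ∀ i < e, SOf e B i = SOf e C i) : B = C := by
  ext p
  rw [mem_iff_div_mem he B, mem_iff_div_mem he C, h _ (Nat.mod_lt _ he)]

lemma SOf_display {e : ℕ} (bd : ℕ → ℕ) (lamOf : ℕ → List ℕ) {i : ℕ} (hi : i < e) :
    SOf e (display e bd lamOf) i = oneRunnerBeta (lamOf i) (bd i) := by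
  ext m
  rw [mem_SOf hi]
  simp only [display, Finset.mem_biUnion, Finset.mem_image, Finset.mem_range]
  constructor
  · rintro ⟨i', hi', m', hm', heq⟩
    have h1 : i' = i := by
      have h2 := congrArg (· % e) heq
      simpa [Nat.add_mul_mod_self_right, Nat.mod_eq_of_lt hi', Nat.mod_eq_of_lt hi] using h2
    subst h1
    have h3 : m' * e = m * e := by omega
    have h4 : m' = m := Nat.eq_of_mul_eq_mul_right (by omega) h3
    rwa [← h4]
  · intro hm
    exact ⟨i, hi, m, hm, rfl⟩

lemma card_SOf (e : ℕ) (B : Finset ℕ) (i : ℕ) :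
    (SOf e B i).card = runnerCount e B i := by
  apply Finset.card_image_of_injOn
  intro p hp q hq h
  simp only [Finset.coe_filter, Set.mem_setOf_eq] at hp hq
  have h' : p / e = q / e := h
  have h1 : e * (p / e) + p % e = p := Nat.div_add_mod p e
  have h2 : e * (q / e) + q % e = q := Nat.div_add_mod q e
  rw [h'] at h1
  omega

lemma beadWeight_row {e : ℕ} (B : Finset ℕ) {i : ℕ} (hi : i < e) (m : ℕ) :
    beadWeight e B (i + m * e)
      = ((Finset.range m).filter (fun m' => m' ∉ SOf e B i)).card := by
  have he : 0 < e := by omega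
  unfold beadWeight
  rw [show ((Finset.range (i + m * e)).filter
        (fun q => q % e = (i + m * e) % e ∧ q ∉ B))
      = ((Finset.range m).filter (fun m' => m' ∉ SOf e B i)).image
          (fun m' => i + m' * e) from ?_,
    Finset.card_image_of_injOn (fun x _ y _ hxy => by
      exact Nat.eq_of_mul_eq_mul_right he (by omega))]
  ext q
  simp only [Finset.mem_filter, Finset.mem_range, Finset.mem_image]
  constructor
  · rintro ⟨hqlt, hqmod, hqB⟩
    rw [Nat.add_mul_mod_self_right, Nat.mod_eq_of_lt hi] at hqmod
    refine ⟨q / e, ⟨?_, ?_⟩, ?_⟩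
    · have h1 : e * (q / e) + q % e = q := Nat.div_add_mod q e
      have hc : e * (q / e) = q / e * e := Nat.mul_comm e (q / e)
      have h2 : q / e * e < m * e := by omega
      exact Nat.lt_of_mul_lt_mul_right h2
    · rw [mem_SOf hi, ← hqmod, Nat.mod_add_div']; exact hqB
    · rw [← hqmod, Nat.mod_add_div']
  · rintro ⟨m', ⟨hm'm, hm'S⟩, rfl⟩
    rw [mem_SOf hi] at hm'S
    refine ⟨?_, ?_, hm'S⟩
    · have : m' * e < m * e := (Nat.mul_lt_mul_right he).mpr hm'm
      omega
    · rw [Nat.add_mul_mod_self_right, Nat.add_mul_mod_self_right]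

lemma weight_decomp {e : ℕ} (he : 0 < e) (B : Finset ℕ) :
    abacusWeight e B = ∑ i ∈ Finset.range e, gw (SOf e B i) := by
  unfold abacusWeight
  rw [← Finset.sum_fiberwise_of_maps_to
    (fun p (_ : p ∈ B) => Finset.mem_range.mpr (Nat.mod_lt p he)) (beadWeight e B)]
  refine Finset.sum_congr rfl (fun i hi => ?_)
  have hie : i < e := Finset.mem_range.mp hi
  unfold gw SOf
  rw [Finset.sum_image (fun p hp q hq h => by
    simp only [Finset.coe_filter, Finset.mem_coe, Finset.mem_filter, Set.mem_setOf_eq] at hp hq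
    have h' : p / e = q / e := h
    have h1 : e * (p / e) + p % e = p := Nat.div_add_mod p e
    have h2 : e * (q / e) + q % e = q := Nat.div_add_mod q e
    rw [h'] at h1
    omega)]
  refine Finset.sum_congr rfl (fun p hp => ?_)
  simp only [Finset.mem_filter] at hp
  have h1 : i + (p / e) * e = p := by rw [← hp.2]; exact Nat.mod_add_div' p e
  rw [← h1, beadWeight_row B hie]
  rw [Nat.add_mul_div_right _ _ he, Nat.div_eq_of_lt hie, Nat.zero_add]
  rfl

lemma mem_lt_of_gw {S : Finset ℕ} {m : ℕ} (hm : m ∈ S) : m < S.card + gw S := by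
  have h1 : ((Finset.range m).filter (fun m' => m' ∉ S)).card ≤ gw S :=
    Finset.single_le_sum (f := fun m => ((Finset.range m).filter (fun m' => m' ∉ S)).card)
      (fun _ _ => Nat.zero_le _) hm
  have h2 : ((Finset.range (m + 1)).filter (fun m' => m' ∈ S)).card ≤ S.card :=
    Finset.card_le_card (fun x hx => (Finset.mem_filter.mp hx).2)
  have h3 : ((Finset.range (m + 1)).filter (fun m' => ¬ m' ∈ S))
      = ((Finset.range m).filter (fun m' => m' ∉ S)) := by
    ext x
    simp only [Finset.mem_filter, Finset.mem_range]
    constructor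
    · rintro ⟨hx1, hx2⟩
      exact ⟨by rcases Nat.lt_succ_iff_lt_or_eq.mp hx1 with h | h; exacts [h, absurd (h ▸ hm) hx2], hx2⟩
    · rintro ⟨hx1, hx2⟩; exact ⟨by omega, hx2⟩
  have h4 := Finset.card_filter_add_card_filter_not
    (s := Finset.range (m + 1)) (fun m' => m' ∈ S)
  rw [h3] at h4
  rw [Finset.card_range] at h4
  omega

lemma sub_SOf_range9 {e : ℕ} (he : 0 < e) (B : Finset ℕ) {i : ℕ} (hi : i < e)
    (hcard : (SOf e B i).card ≤ 5) (hgw : gw (SOf e B i) ≤ 4) :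
    SOf e B i ⊆ Finset.range 9 := by
  intro m hm
  have := mem_lt_of_gw hm
  exact Finset.mem_range.mpr (by omega)

end Stmt11

namespace Stmt11

lemma filter_range_mod {e a : ℕ} (ha : a < e) (N : ℕ) :
    ∃ K, (List.range N).filter (fun p => p % e == a)
        = (List.range K).map (fun m => a + m * e)
      ∧ N ≤ a + K * e ∧ a + K * e < N + e := by
  induction N with
  | zero =>
    refine ⟨0, by simp, by omega, ?_⟩
    simpa using ha
  | succ n ih =>
    obtain ⟨K, hK, h1, h2⟩ := ih
    rw [List.range_succ, List.filter_append]
    by_cases hmod : n % e = a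
    · have hq : e * (n / e) + a = n := by rw [← hmod]; exact Nat.div_add_mod n e
      have hcm : e * (n / e) = (n / e) * e := Nat.mul_comm _ _
      have hn : n = a + K * e := by
        have hc1 : n / e ≤ K := by
          have hh : (n / e) * e ≤ K * e := by omega
          exact Nat.le_of_mul_le_mul_right hh (by omega)
        have hc2 : K ≤ n / e := by
          have hd : (n / e + 1) * e = n / e * e + e := by ring
          have hh : K * e < (n / e + 1) * e := by omega
          have := Nat.lt_of_mul_lt_mul_right hh
          omega
        have : K = n / e := by omega
        rw [this]; omega
      have hKe : a + (K + 1) * e = a + K * e + e := by ring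
      refine ⟨K + 1, ?_, by omega, by omega⟩
      rw [List.range_succ, List.map_append, hK]
      have hb : (n % e == a) = true := by simpa using hmod
      have : (List.filter (fun p => p % e == a) [n]) = [n] := by
        simp [List.filter, hb]
      rw [this]
      simp [hn]
    · have hne : n ≠ a + K * e := by
        intro h
        apply hmod
        rw [h, Nat.add_mul_mod_self_right, Nat.mod_eq_of_lt ha]
      refine ⟨K, ?_, by omega, by omega⟩
      rw [hK]
      have hb : (n % e == a) = false := by simpa using hmod
      have : (List.filter (fun p => p % e == a) [n]) = [] := by
        simp [List.filter, hb]
      rw [this, List.append_nil]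

def len2 (st : List ℕ × List ℕ) : ℕ × ℕ := (st.1.length, st.2.length)

lemma len2_signStep (B : Finset ℕ) (st : List ℕ × List ℕ) {p : ℕ} (hp : p ≠ 0)
    {S4 S5 : Finset ℕ} {m : ℕ} (h5 : p ∈ B ↔ m ∈ S5) (h4 : p - 1 ∈ B ↔ m ∈ S4) :
    len2 (signStep B st p) = absStep S4 S5 (len2 st) m := by
  obtain ⟨l1, l2⟩ := st
  by_cases h5m : m ∈ S5 <;> by_cases h4m : m ∈ S4 <;> cases l2 <;>
    simp [signStep, absStep, len2, hp, h5, h4, h5m, h4m]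

lemma len2_foldl (B S4 S5 : Finset ℕ) (a e : ℕ) (ha : a ≠ 0)
    (h5 : ∀ m, a + m * e ∈ B ↔ m ∈ S5) (h4 : ∀ m, (a - 1) + m * e ∈ B ↔ m ∈ S4) :
    ∀ (l : List ℕ) (st : List ℕ × List ℕ),
      len2 (l.foldl (fun s m => signStep B s (a + m * e)) st)
        = l.foldl (absStep S4 S5) (len2 st)
  | [], _ => rfl
  | m :: l, st => by
    rw [List.foldl_cons, List.foldl_cons,
      len2_foldl B S4 S5 a e ha h5 h4 l _,
      len2_signStep B st (by omega) (h5 m) (by rw [show a + m * e - 1 = (a - 1) + m * e by omega]; exact h4 m)]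

lemma foldl_id {α β : Type*} (f : α → β → α) (l : List β)
    (h : ∀ x ∈ l, ∀ s, f s x = s) (s : α) : l.foldl f s = s := by
  induction l generalizing s with
  | nil => rfl
  | cons x l ih =>
    rw [List.foldl_cons, h x (by simp), ih (fun y hy => h y (by simp [hy]))]

lemma foldl_range_stable {α : Type*} (f : α → ℕ → α) (M : ℕ)
    (h : ∀ m, M ≤ m → ∀ s, f s m = s) {K : ℕ} (hK : M ≤ K) (init : α) :
    (List.range K).foldl f init = (List.range M).foldl f init := by
  have hKe : K = M + (K - M) := by omega
  rw [hKe, List.range_add, List.foldl_append]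
  apply foldl_id
  intro x hx s
  simp only [List.mem_map, List.mem_range] at hx
  obtain ⟨y, _, rfl⟩ := hx
  exact h _ (by omega) s

lemma absStep_noop {S4 S5 : Finset ℕ} {m : ℕ} (h5 : m ∉ S5) (h4 : m ∉ S4) (st : ℕ × ℕ) :
    absStep S4 S5 st m = st := by simp [absStep, h4, h5]

lemma epsB_eq_eps9 {e a : ℕ} (ha : 0 < a) (hae : a < e) (B : Finset ℕ)
    (hs4 : SOf e B (a - 1) ⊆ Finset.range 9) (hs5 : SOf e B a ⊆ Finset.range 9) :
    epsB e B a = eps9 (SOf e B (a - 1)) (SOf e B a) := by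
  set S4 := SOf e B (a - 1) with hS4
  set S5 := SOf e B a with hS5
  obtain ⟨K, hK, h1, h2⟩ := filter_range_mod hae (B.sup id + e + 2)
  have h5 : ∀ m, a + m * e ∈ B ↔ m ∈ S5 := fun m => (mem_SOf hae B m).symm
  have h4 : ∀ m, (a - 1) + m * e ∈ B ↔ m ∈ S4 := fun m =>
    (mem_SOf (by omega : a - 1 < e) B m).symm
  -- members of S4 ∪ S5 are < min K 9
  have hmem : ∀ m, m ∈ S5 ∨ m ∈ S4 → m < min K 9 := by
    intro m hm
    have h9 : m < 9 := by
      rcases hm with h | h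
      · exact Finset.mem_range.mp (hs5 h)
      · exact Finset.mem_range.mp (hs4 h)
    have hK' : m < K := by
      have hsup : a + m * e ≤ B.sup id + 1 := by
        rcases hm with h | h
        · have := Finset.le_sup (f := id) ((h5 m).mpr h)
          simp only [id] at this; omega
        · have := Finset.le_sup (f := id) ((h4 m).mpr h)
          simp only [id] at this; omega
      have hme : m * e < K * e := by omega
      exact Nat.lt_of_mul_lt_mul_right hme
    omega
  have hnoop : ∀ m, min K 9 ≤ m → ∀ st, absStep S4 S5 st m = st := by
    intro m hm st
    refine absStep_noop (fun h => ?_) (fun h => ?_) st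
    · exact absurd (hmem m (Or.inl h)) (by omega)
    · exact absurd (hmem m (Or.inr h)) (by omega)
  have key : epsB e B a
      = ((List.range K).foldl (absStep S4 S5) (0, 0)).2 := by
    show ((signState e B a).2).length = _
    unfold signState posList
    rw [hK, List.foldl_map]
    have := len2_foldl B S4 S5 a e (by omega) h5 h4 (List.range K) ([], [])
    have h0 : len2 (([], []) : List ℕ × List ℕ) = (0, 0) := rfl
    rw [h0] at this
    exact congrArg Prod.snd this
  have e1 := foldl_range_stable _ (min K 9) hnoop (show min K 9 ≤ K by omega) ((0, 0) : ℕ × ℕ)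
  have e2 := foldl_range_stable _ (min K 9) hnoop (show min K 9 ≤ 9 by omega) ((0, 0) : ℕ × ℕ)
  rw [key, e1]
  unfold eps9
  rw [e2]

end Stmt11

namespace Stmt11

section Classify

set_option maxRecDepth 100000

lemma class4_0 : ∀ S ∈ (Finset.range 9).powerset, S.card = 4 → gw S = 0 →
    S = oneRunnerBeta [] 4 := by decide
lemma class4_1 : ∀ S ∈ (Finset.range 9).powerset, S.card = 4 → gw S = 1 →
    S = oneRunnerBeta [1] 4 := by decide
lemma class4_2 : ∀ S ∈ (Finset.range 9).powerset, S.card = 4 → gw S = 2 →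
    S = oneRunnerBeta [2] 4 ∨ S = oneRunnerBeta [1,1] 4 := by decide
lemma class4_3 : ∀ S ∈ (Finset.range 9).powerset, S.card = 4 → gw S = 3 →
    S = oneRunnerBeta [3] 4 ∨ S = oneRunnerBeta [2,1] 4 ∨ S = oneRunnerBeta [1,1,1] 4 := by
  decide
lemma class4_4 : ∀ S ∈ (Finset.range 9).powerset, S.card = 4 → gw S = 4 →
    S = oneRunnerBeta [4] 4 ∨ S = oneRunnerBeta [3,1] 4 ∨ S = oneRunnerBeta [2,2] 4 ∨
    S = oneRunnerBeta [2,1,1] 4 ∨ S = oneRunnerBeta [1,1,1,1] 4 := by decide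
lemma class5_0 : ∀ S ∈ (Finset.range 9).powerset, S.card = 5 → gw S = 0 →
    S = oneRunnerBeta [] 5 := by decide
lemma class5_1 : ∀ S ∈ (Finset.range 9).powerset, S.card = 5 → gw S = 1 →
    S = oneRunnerBeta [1] 5 := by decide
lemma class5_2 : ∀ S ∈ (Finset.range 9).powerset, S.card = 5 → gw S = 2 →
    S = oneRunnerBeta [2] 5 ∨ S = oneRunnerBeta [1,1] 5 := by decide
lemma class5_3 : ∀ S ∈ (Finset.range 9).powerset, S.card = 5 → gw S = 3 →
    S = oneRunnerBeta [3] 5 ∨ S = oneRunnerBeta [2,1] 5 ∨ S = oneRunnerBeta [1,1,1] 5 := by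
  decide
lemma class5_4 : ∀ S ∈ (Finset.range 9).powerset, S.card = 5 → gw S = 4 →
    S = oneRunnerBeta [4] 5 ∨ S = oneRunnerBeta [3,1] 5 ∨ S = oneRunnerBeta [2,2] 5 ∨
    S = oneRunnerBeta [2,1,1] 5 ∨ S = oneRunnerBeta [1,1,1,1] 5 := by decide

end Classify

lemma sum_eq_one {s : Finset ℕ} {f : ℕ → ℕ} (h : ∑ i ∈ s, f i = 1) :
    ∃ i ∈ s, f i = 1 ∧ ∀ j ∈ s, j ≠ i → f j = 0 := by
  have h0 : ∃ i ∈ s, f i ≠ 0 := by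
    by_contra hc
    push_neg at hc
    rw [Finset.sum_eq_zero (fun i hi => hc i hi)] at h
    omega
  obtain ⟨i, hi, hfi⟩ := h0
  have hle : f i ≤ 1 := h ▸ Finset.single_le_sum (fun _ _ => Nat.zero_le _) hi
  have hfi1 : f i = 1 := by omega
  have hrest : ∑ j ∈ s.erase i, f j = 0 := by
    have := Finset.sum_erase_add s f hi
    omega
  refine ⟨i, hi, hfi1, fun j hj hji => ?_⟩
  exact (Finset.sum_eq_zero_iff).mp hrest j (Finset.mem_erase.mpr ⟨hji, hj⟩)

lemma sum_eq_two {s : Finset ℕ} {f : ℕ → ℕ} (h : ∑ i ∈ s, f i = 2) :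
    (∃ i ∈ s, f i = 2 ∧ ∀ j ∈ s, j ≠ i → f j = 0) ∨
    (∃ i ∈ s, ∃ j ∈ s, i ≠ j ∧ f i = 1 ∧ f j = 1 ∧
      ∀ k ∈ s, k ≠ i → k ≠ j → f k = 0) := by
  have h0 : ∃ i ∈ s, f i ≠ 0 := by
    by_contra hc
    push_neg at hc
    rw [Finset.sum_eq_zero (fun i hi => hc i hi)] at h
    omega
  obtain ⟨i, hi, hfi⟩ := h0
  have hle : f i ≤ 2 := h ▸ Finset.single_le_sum (fun _ _ => Nat.zero_le _) hi
  have hsum := Finset.sum_erase_add s f hi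
  rcases (by omega : f i = 2 ∨ f i = 1) with h2 | h1
  · left
    have hrest : ∑ j ∈ s.erase i, f j = 0 := by omega
    exact ⟨i, hi, h2, fun j hj hji =>
      (Finset.sum_eq_zero_iff).mp hrest j (Finset.mem_erase.mpr ⟨hji, hj⟩)⟩
  · right
    have hrest : ∑ j ∈ s.erase i, f j = 1 := by omega
    obtain ⟨j, hj, hfj, hz⟩ := sum_eq_one hrest
    have hjs := (Finset.mem_erase.mp hj).2
    have hjne := (Finset.mem_erase.mp hj).1
    refine ⟨i, hi, j, hjs, fun hh => hjne hh.symm, h1, hfj, fun k hk hki hkj => ?_⟩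
    exact hz k (Finset.mem_erase.mpr ⟨hki, hk⟩) hkj

lemma build_display {e : ℕ} (he : 0 < e) (B : Finset ℕ) (bd : ℕ → ℕ) (lamOf : ℕ → List ℕ)
    (h : ∀ i < e, SOf e B i = oneRunnerBeta (lamOf i) (bd i)) :
    B = display e bd lamOf :=
  eq_of_SOf_eq he (fun i hi => by rw [h i hi, SOf_display bd lamOf hi])

lemma runner_zero {c : ℕ} (hc : c = 4 ∨ c = 5) {S : Finset ℕ} (hsub : S ⊆ Finset.range 9)
    (hcard : S.card = c) (hw : gw S = 0) : S = oneRunnerBeta [] c := by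
  rcases hc with rfl | rfl
  · exact class4_0 S (Finset.mem_powerset.mpr hsub) hcard hw
  · exact class5_0 S (Finset.mem_powerset.mpr hsub) hcard hw

lemma runner_one {c : ℕ} (hc : c = 4 ∨ c = 5) {S : Finset ℕ} (hsub : S ⊆ Finset.range 9)
    (hcard : S.card = c) (hw : gw S = 1) : S = oneRunnerBeta [1] c := by
  rcases hc with rfl | rfl
  · exact class4_1 S (Finset.mem_powerset.mpr hsub) hcard hw
  · exact class5_1 S (Finset.mem_powerset.mpr hsub) hcard hw

lemma runner_two {c : ℕ} (hc : c = 4 ∨ c = 5) {S : Finset ℕ} (hsub : S ⊆ Finset.range 9)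
    (hcard : S.card = c) (hw : gw S = 2) :
    S = oneRunnerBeta [2] c ∨ S = oneRunnerBeta [1,1] c := by
  rcases hc with rfl | rfl
  · exact class4_2 S (Finset.mem_powerset.mpr hsub) hcard hw
  · exact class5_2 S (Finset.mem_powerset.mpr hsub) hcard hw

end Stmt11

open Stmt11 in
/-- exceptional partitions for the `[4:1]`-pair formed by the block
`⟨4^a, 5^{b−a}, 4^{e−b}⟩` via the residue carried by runner `a`. -/
theorem stmt11 (e a b : ℕ) (he : 2 ≤ e) (ha : 0 < a) (hab : a < b) (hbe : b ≤ e)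
    (bd : ℕ → ℕ) (hbd : bd = fun i => if i < a then 4 else if i < b then 5 else 4)
    (r : ℕ) (hr : r = (Finset.range e).sum bd)
    (lam : AbacusPartition) (hlam : inBlock e bd 4 lam)
    (B : Finset ℕ) (hB : B = lam.betaSet r) :
    2 ≤ epsB e B a ↔
      (B = display e bd (fun m => if m = a then [3, 1] else []) ∨
       B = display e bd (fun m => if m = a then [2, 2] else []) ∨
       B = display e bd (fun m => if m = a then [2, 1, 1] else []) ∨
       (∃ i, i < e ∧ i ≠ a - 1 ∧ i ≠ a ∧
         B = display e bd (fun m => if m = a then [2, 1] else if m = i then [1] else [])) ∨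
       (∃ i, i < e ∧ i ≠ a - 1 ∧ i ≠ a ∧
         B = display e bd (fun m => if m = a then [1, 1] else if m = i then [2] else [])) ∨
       (∃ i j, i < j ∧ j < e ∧ i ≠ a - 1 ∧ i ≠ a ∧ j ≠ a - 1 ∧ j ≠ a ∧
         B = display e bd
           (fun m => if m = a then [1, 1] else if m = i ∨ m = j then [1] else [])) ∨
       (∃ i, i < e ∧ i ≠ a ∧
         B = display e bd (fun m => if m = a then [1, 1, 1] else if m = i then [1] else [])) ∨
       (∃ i, i < e ∧ i ≠ a - 1 ∧ i ≠ a ∧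
         B = display e bd (fun m => if m = a then [1, 1] else if m = i then [1, 1] else [])) ∨
       B = display e bd (fun m => if m = a then [1, 1, 1, 1] else [])) := by
  have he0 : 0 < e := by omega
  have hae : a < e := by omega
  have ha1e : a - 1 < e := by omega
  have hbda : bd a = 5 := by rw [hbd]; simp [hab, lt_irrefl]
  have hbda1 : bd (a - 1) = 4 := by rw [hbd]; simp only []; rw [if_pos (by omega)]
  have hbd45 : ∀ i, bd i = 4 ∨ bd i = 5 := by
    intro i; rw [hbd]; dsimp only; split_ifs <;> simp
  have hcount : ∀ i < e, runnerCount e B i = bd i := by rw [hB, hr]; exact hlam.2.1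
  have hwt : abacusWeight e B = 4 := by rw [hB, hr]; exact hlam.2.2
  have hwsum : ∑ i ∈ Finset.range e, gw (SOf e B i) = 4 := by
    rw [← weight_decomp he0]; exact hwt
  have hcard : ∀ i < e, (SOf e B i).card = bd i := fun i hi => by
    rw [card_SOf]; exact hcount i hi
  have hgwle : ∀ i < e, gw (SOf e B i) ≤ 4 := fun i hi =>
    hwsum ▸ Finset.single_le_sum (f := fun i => gw (SOf e B i)) (fun _ _ => Nat.zero_le _) (Finset.mem_range.mpr hi)
  have hsub : ∀ i < e, SOf e B i ⊆ Finset.range 9 := fun i hi =>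
    sub_SOf_range9 he0 B hi (by rcases hbd45 i with h | h <;> rw [hcard i hi, h] <;> omega)
      (hgwle i hi)
  have hs4 := hsub (a - 1) ha1e
  have hs5 := hsub a hae
  rw [epsB_eq_eps9 ha hae B hs4 hs5]
  have hcard4 : (SOf e B (a - 1)).card = 4 := by rw [hcard (a - 1) ha1e]; exact hbda1
  have hcard5 : (SOf e B a).card = 5 := by rw [hcard a hae]; exact hbda
  have hother : ∀ i, i < e → gw (SOf e B i) = 0 → SOf e B i = oneRunnerBeta [] (bd i) :=
    fun i hi hz => runner_zero (hbd45 i) (hsub i hi) (hcard i hi) hz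
  have honer : ∀ i, i < e → gw (SOf e B i) = 1 → SOf e B i = oneRunnerBeta [1] (bd i) :=
    fun i hi hz => runner_one (hbd45 i) (hsub i hi) (hcard i hi) hz
  have hsum1 : (∑ i ∈ (Finset.range e).erase a, gw (SOf e B i)) + gw (SOf e B a) = 4 := by
    rw [Finset.sum_erase_add _ _ (Finset.mem_range.mpr hae)]; exact hwsum
  have hsum2 : (∑ i ∈ ((Finset.range e).erase a).erase (a - 1), gw (SOf e B i))
      + gw (SOf e B (a - 1))
      = ∑ i ∈ (Finset.range e).erase a, gw (SOf e B i) :=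
    Finset.sum_erase_add _ _ (Finset.mem_erase.mpr ⟨by omega, Finset.mem_range.mpr ha1e⟩)
  have hmem_s2 : ∀ i, i ∈ ((Finset.range e).erase a).erase (a - 1) ↔
      (i ≠ a - 1 ∧ i ≠ a ∧ i < e) := by
    intro i
    constructor
    · intro h
      have h1 := Finset.mem_erase.mp h
      have h2 := Finset.mem_erase.mp h1.2
      exact ⟨h1.1, h2.1, Finset.mem_range.mp h2.2⟩
    · rintro ⟨h1, h2, h3⟩
      exact Finset.mem_erase.mpr ⟨h1, Finset.mem_erase.mpr ⟨h2, Finset.mem_range.mpr h3⟩⟩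
  constructor
  · -- forward direction
    intro h2e
    have hW5le : gw (SOf e B a) ≤ 4 := hgwle a hae
    have hW4le : gw (SOf e B (a - 1)) ≤ 4 := hgwle (a - 1) ha1e
    rcases (show gw (SOf e B a) = 0 ∨ gw (SOf e B a) = 1 ∨ gw (SOf e B a) = 2 ∨ gw (SOf e B a) = 3 ∨ gw (SOf e B a) = 4 by omega) with hW5 | hW5 | hW5 | hW5 | hW5
    · -- W5 = 0, sigma = []
      have hS5 := class5_0 _ (Finset.mem_powerset.mpr hs5) hcard5 hW5
      rw [hS5] at h2e
      rcases (show gw (SOf e B (a - 1)) = 0 ∨ gw (SOf e B (a - 1)) = 1 ∨ gw (SOf e B (a - 1)) = 2 ∨ gw (SOf e B (a - 1)) = 3 ∨ gw (SOf e B (a - 1)) = 4 by omega) with hW4 | hW4 | hW4 | hW4 | hW4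
      · -- W4 = 0
        have hS4 := class4_0 _ (Finset.mem_powerset.mpr hs4) hcard4 hW4
        rw [hS4] at h2e; exact absurd h2e (by decide)
      · -- W4 = 1
        have hS4 := class4_1 _ (Finset.mem_powerset.mpr hs4) hcard4 hW4
        rw [hS4] at h2e; exact absurd h2e (by decide)
      · -- W4 = 2
        rcases class4_2 _ (Finset.mem_powerset.mpr hs4) hcard4 hW4 with hS4 | hS4 <;> rw [hS4] at h2e <;>
          exact absurd h2e (by decide)
      · -- W4 = 3
        rcases class4_3 _ (Finset.mem_powerset.mpr hs4) hcard4 hW4 with hS4 | hS4 | hS4 <;> rw [hS4] at h2e <;>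
          exact absurd h2e (by decide)
      · -- W4 = 4
        rcases class4_4 _ (Finset.mem_powerset.mpr hs4) hcard4 hW4 with hS4 | hS4 | hS4 | hS4 | hS4 <;> rw [hS4] at h2e <;>
          exact absurd h2e (by decide)
    · -- W5 = 1, sigma = [1]
      have hS5 := class5_1 _ (Finset.mem_powerset.mpr hs5) hcard5 hW5
      rw [hS5] at h2e
      rcases (show gw (SOf e B (a - 1)) = 0 ∨ gw (SOf e B (a - 1)) = 1 ∨ gw (SOf e B (a - 1)) = 2 ∨ gw (SOf e B (a - 1)) = 3 by omega) with hW4 | hW4 | hW4 | hW4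
      · -- W4 = 0
        have hS4 := class4_0 _ (Finset.mem_powerset.mpr hs4) hcard4 hW4
        rw [hS4] at h2e; exact absurd h2e (by decide)
      · -- W4 = 1
        have hS4 := class4_1 _ (Finset.mem_powerset.mpr hs4) hcard4 hW4
        rw [hS4] at h2e; exact absurd h2e (by decide)
      · -- W4 = 2
        rcases class4_2 _ (Finset.mem_powerset.mpr hs4) hcard4 hW4 with hS4 | hS4 <;> rw [hS4] at h2e <;>
          exact absurd h2e (by decide)
      · -- W4 = 3
        rcases class4_3 _ (Finset.mem_powerset.mpr hs4) hcard4 hW4 with hS4 | hS4 | hS4 <;> rw [hS4] at h2e <;>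
          exact absurd h2e (by decide)
    · -- W5 = 2
      rcases class5_2 _ (Finset.mem_powerset.mpr hs5) hcard5 hW5 with hS5 | hS5
      · -- sigma = [2]: all negative
        rw [hS5] at h2e
        rcases (show gw (SOf e B (a - 1)) = 0 ∨ gw (SOf e B (a - 1)) = 1 ∨ gw (SOf e B (a - 1)) = 2 by omega) with hW4 | hW4 | hW4
        · -- W4 = 0
          have hS4 := class4_0 _ (Finset.mem_powerset.mpr hs4) hcard4 hW4
          rw [hS4] at h2e; exact absurd h2e (by decide)
        · -- W4 = 1
          have hS4 := class4_1 _ (Finset.mem_powerset.mpr hs4) hcard4 hW4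
          rw [hS4] at h2e; exact absurd h2e (by decide)
        · -- W4 = 2
          rcases class4_2 _ (Finset.mem_powerset.mpr hs4) hcard4 hW4 with hS4 | hS4 <;> rw [hS4] at h2e <;>
            exact absurd h2e (by decide)
      · -- sigma = [1,1]
        rw [hS5] at h2e
        rcases (show gw (SOf e B (a - 1)) = 0 ∨ gw (SOf e B (a - 1)) = 1 ∨ gw (SOf e B (a - 1)) = 2 by omega) with hW4 | hW4 | hW4
        · -- W4 = 0
          have hS4 := class4_0 _ (Finset.mem_powerset.mpr hs4) hcard4 hW4
          rcases sum_eq_two (show (∑ i ∈ ((Finset.range e).erase a).erase (a - 1), gw (SOf e B i)) = 2 by omega) with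
            ⟨i0, hi0mem, hi0w, hz⟩ | ⟨i0, hi0mem, j0, hj0mem, hne0, hwi, hwj, hz⟩
          · -- single runner of weight 2
            obtain ⟨hi0n1, hi0na, hi0e⟩ := (hmem_s2 i0).mp hi0mem
            rcases runner_two (hbd45 i0) (hsub i0 hi0e) (hcard i0 hi0e) hi0w with h2 | h2
            · -- [2] on runner i0 : disjunct 5
              refine Or.inr (Or.inr (Or.inr (Or.inr (Or.inl ⟨i0, hi0e, hi0n1, hi0na, ?_⟩))))
              apply build_display he0
              intro i hi
              by_cases hia2 : i = a
              · subst hia2; simp only [eq_self_iff_true, if_true, hbda]; exact hS5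
              · rw [if_neg hia2]
                by_cases hia1 : i = a - 1
                · subst hia1; rw [if_neg (fun h => hi0n1 h.symm), hbda1]; exact hS4
                · by_cases hii0 : i = i0
                  · subst hii0; simp only [eq_self_iff_true, if_true]; exact h2
                  · rw [if_neg hii0]
                    exact hother i hi (hz i ((hmem_s2 i).mpr ⟨hia1, hia2, hi⟩) hii0)
            · -- [1,1] on runner i0 : disjunct 8
              refine Or.inr (Or.inr (Or.inr (Or.inr (Or.inr (Or.inr (Or.inr (Or.inl ⟨i0, hi0e, hi0n1, hi0na, ?_⟩)))))))
              apply build_display he0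
              intro i hi
              by_cases hia2 : i = a
              · subst hia2; simp only [eq_self_iff_true, if_true, hbda]; exact hS5
              · rw [if_neg hia2]
                by_cases hia1 : i = a - 1
                · subst hia1; rw [if_neg (fun h => hi0n1 h.symm), hbda1]; exact hS4
                · by_cases hii0 : i = i0
                  · subst hii0; simp only [eq_self_iff_true, if_true]; exact h2
                  · rw [if_neg hii0]
                    exact hother i hi (hz i ((hmem_s2 i).mpr ⟨hia1, hia2, hi⟩) hii0)
          · -- two runners of weight 1 : disjunct 6
            obtain ⟨hi0n1, hi0na, hi0e⟩ := (hmem_s2 i0).mp hi0mem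
            obtain ⟨hj0n1, hj0na, hj0e⟩ := (hmem_s2 j0).mp hj0mem
            rcases (show i0 < j0 ∨ j0 < i0 by omega) with hlt | hlt
            · refine Or.inr (Or.inr (Or.inr (Or.inr (Or.inr (Or.inl ⟨i0, j0, hlt, hj0e, hi0n1, hi0na, hj0n1, hj0na, ?_⟩)))))
              apply build_display he0
              intro i hi
              by_cases hia2 : i = a
              · subst hia2; simp only [eq_self_iff_true, if_true, hbda]; exact hS5
              · rw [if_neg hia2]
                by_cases hc : i = i0 ∨ i = j0
                · rw [if_pos hc]
                  rcases hc with rfl | rfl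
                  · exact honer _ hi hwi
                  · exact honer _ hi hwj
                · rw [if_neg hc]
                  push_neg at hc
                  by_cases hia1 : i = a - 1
                  · subst hia1; rw [hbda1]; exact hS4
                  · refine hother i hi (hz i ((hmem_s2 i).mpr ⟨hia1, hia2, hi⟩) ?_ ?_)
                    · exact hc.1
                    · exact hc.2
            · refine Or.inr (Or.inr (Or.inr (Or.inr (Or.inr (Or.inl ⟨j0, i0, hlt, hi0e, hj0n1, hj0na, hi0n1, hi0na, ?_⟩)))))
              apply build_display he0
              intro i hi
              by_cases hia2 : i = a
              · subst hia2; simp only [eq_self_iff_true, if_true, hbda]; exact hS5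
              · rw [if_neg hia2]
                by_cases hc : i = j0 ∨ i = i0
                · rw [if_pos hc]
                  rcases hc with rfl | rfl
                  · exact honer _ hi hwj
                  · exact honer _ hi hwi
                · rw [if_neg hc]
                  push_neg at hc
                  by_cases hia1 : i = a - 1
                  · subst hia1; rw [hbda1]; exact hS4
                  · refine hother i hi (hz i ((hmem_s2 i).mpr ⟨hia1, hia2, hi⟩) ?_ ?_)
                    · exact hc.2
                    · exact hc.1
        · -- W4 = 1
          have hS4 := class4_1 _ (Finset.mem_powerset.mpr hs4) hcard4 hW4
          rw [hS4] at h2e; exact absurd h2e (by decide)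
        · -- W4 = 2
          rcases class4_2 _ (Finset.mem_powerset.mpr hs4) hcard4 hW4 with hS4 | hS4 <;> rw [hS4] at h2e <;>
            exact absurd h2e (by decide)
    · -- W5 = 3
      rcases class5_3 _ (Finset.mem_powerset.mpr hs5) hcard5 hW5 with hS5 | hS5 | hS5
      · -- sigma = [3]: negative
        rw [hS5] at h2e
        rcases (show gw (SOf e B (a - 1)) = 0 ∨ gw (SOf e B (a - 1)) = 1 by omega) with hW4 | hW4
        · -- W4 = 0
          have hS4 := class4_0 _ (Finset.mem_powerset.mpr hs4) hcard4 hW4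
          rw [hS4] at h2e; exact absurd h2e (by decide)
        · -- W4 = 1
          have hS4 := class4_1 _ (Finset.mem_powerset.mpr hs4) hcard4 hW4
          rw [hS4] at h2e; exact absurd h2e (by decide)
      · -- sigma = [2,1]
        rw [hS5] at h2e
        rcases (show gw (SOf e B (a - 1)) = 0 ∨ gw (SOf e B (a - 1)) = 1 by omega) with hW4 | hW4
        · -- W4 = 0
          have hS4 := class4_0 _ (Finset.mem_powerset.mpr hs4) hcard4 hW4
          obtain ⟨i0, hi0mem, hi0w, hz⟩ := sum_eq_one
            (show (∑ i ∈ ((Finset.range e).erase a).erase (a - 1), gw (SOf e B i)) = 1 by omega)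
          obtain ⟨hi0n1, hi0na, hi0e⟩ := (hmem_s2 i0).mp hi0mem
          refine Or.inr (Or.inr (Or.inr (Or.inl ⟨i0, hi0e, hi0n1, hi0na, ?_⟩)))
          apply build_display he0
          intro i hi
          by_cases hia2 : i = a
          · subst hia2; simp only [eq_self_iff_true, if_true, hbda]; exact hS5
          · rw [if_neg hia2]
            by_cases hia1 : i = a - 1
            · subst hia1; rw [if_neg (fun h => hi0n1 h.symm), hbda1]; exact hS4
            · by_cases hii0 : i = i0
              · subst hii0; simp only [eq_self_iff_true, if_true]; exact honer _ hi hi0w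
              · rw [if_neg hii0]
                exact hother i hi (hz i ((hmem_s2 i).mpr ⟨hia1, hia2, hi⟩) hii0)
        · -- W4 = 1
          have hS4 := class4_1 _ (Finset.mem_powerset.mpr hs4) hcard4 hW4
          rw [hS4] at h2e; exact absurd h2e (by decide)
      · -- sigma = [1,1,1] : disjunct 7 (both W4 = 0 and W4 = 1 exceptional)
        rw [hS5] at h2e
        rcases (show gw (SOf e B (a - 1)) = 0 ∨ gw (SOf e B (a - 1)) = 1 by omega) with hW4 | hW4
        · -- W4 = 0
          have hS4 := class4_0 _ (Finset.mem_powerset.mpr hs4) hcard4 hW4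
          obtain ⟨i0, hi0mem, hi0w, hz⟩ := sum_eq_one
            (show (∑ i ∈ ((Finset.range e).erase a).erase (a - 1), gw (SOf e B i)) = 1 by omega)
          obtain ⟨hi0n1, hi0na, hi0e⟩ := (hmem_s2 i0).mp hi0mem
          refine Or.inr (Or.inr (Or.inr (Or.inr (Or.inr (Or.inr (Or.inl ⟨i0, hi0e, hi0na, ?_⟩))))))
          apply build_display he0
          intro i hi
          by_cases hia2 : i = a
          · subst hia2; simp only [eq_self_iff_true, if_true, hbda]; exact hS5
          · rw [if_neg hia2]
            by_cases hia1 : i = a - 1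
            · subst hia1; rw [if_neg (fun h => hi0n1 h.symm), hbda1]; exact hS4
            · by_cases hii0 : i = i0
              · subst hii0; simp only [eq_self_iff_true, if_true]; exact honer _ hi hi0w
              · rw [if_neg hii0]
                exact hother i hi (hz i ((hmem_s2 i).mpr ⟨hia1, hia2, hi⟩) hii0)
        · -- W4 = 1
          have hS4 := class4_1 _ (Finset.mem_powerset.mpr hs4) hcard4 hW4
          have hz : ∀ i ∈ ((Finset.range e).erase a).erase (a - 1), gw (SOf e B i) = 0 :=
            Finset.sum_eq_zero_iff.mp (by omega)
          refine Or.inr (Or.inr (Or.inr (Or.inr (Or.inr (Or.inr (Or.inl ⟨a - 1, ha1e, (by omega : a - 1 ≠ a), ?_⟩))))))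
          apply build_display he0
          intro i hi
          by_cases hia2 : i = a
          · subst hia2; simp only [eq_self_iff_true, if_true, hbda]; exact hS5
          · rw [if_neg hia2]
            by_cases hia1 : i = a - 1
            · subst hia1; simp only [eq_self_iff_true, if_true, hbda1]; exact hS4
            · rw [if_neg hia1]
              exact hother i hi (hz i ((hmem_s2 i).mpr ⟨hia1, hia2, hi⟩))
    · -- W5 = 4
      have hW4 : gw (SOf e B (a - 1)) = 0 := by omega
      have hS4 := class4_0 _ (Finset.mem_powerset.mpr hs4) hcard4 hW4
      have hz : ∀ i ∈ ((Finset.range e).erase a).erase (a - 1), gw (SOf e B i) = 0 :=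
        Finset.sum_eq_zero_iff.mp (by omega)
      rcases class5_4 _ (Finset.mem_powerset.mpr hs5) hcard5 hW5 with hS5 | hS5 | hS5 | hS5 | hS5
      · -- sigma = [4]: negative
        rw [hS5, hS4] at h2e; exact absurd h2e (by decide)
      · -- sigma = [3, 1]
        refine Or.inl ?_
        apply build_display he0
        intro i hi
        by_cases hia2 : i = a
        · subst hia2; simp only [eq_self_iff_true, if_true, hbda]; exact hS5
        · rw [if_neg hia2]
          by_cases hia1 : i = a - 1
          · subst hia1; rw [hbda1]; exact hS4
          · exact hother i hi (hz i ((hmem_s2 i).mpr ⟨hia1, hia2, hi⟩))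
      · -- sigma = [2, 2]
        refine Or.inr (Or.inl ?_)
        apply build_display he0
        intro i hi
        by_cases hia2 : i = a
        · subst hia2; simp only [eq_self_iff_true, if_true, hbda]; exact hS5
        · rw [if_neg hia2]
          by_cases hia1 : i = a - 1
          · subst hia1; rw [hbda1]; exact hS4
          · exact hother i hi (hz i ((hmem_s2 i).mpr ⟨hia1, hia2, hi⟩))
      · -- sigma = [2, 1, 1]
        refine Or.inr (Or.inr (Or.inl ?_))
        apply build_display he0
        intro i hi
        by_cases hia2 : i = a
        · subst hia2; simp only [eq_self_iff_true, if_true, hbda]; exact hS5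
        · rw [if_neg hia2]
          by_cases hia1 : i = a - 1
          · subst hia1; rw [hbda1]; exact hS4
          · exact hother i hi (hz i ((hmem_s2 i).mpr ⟨hia1, hia2, hi⟩))
      · -- sigma = [1, 1, 1, 1]
        refine Or.inr (Or.inr (Or.inr (Or.inr (Or.inr (Or.inr (Or.inr (Or.inr (?_))))))))
        apply build_display he0
        intro i hi
        by_cases hia2 : i = a
        · subst hia2; simp only [eq_self_iff_true, if_true, hbda]; exact hS5
        · rw [if_neg hia2]
          by_cases hia1 : i = a - 1
          · subst hia1; rw [hbda1]; exact hS4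
          · exact hother i hi (hz i ((hmem_s2 i).mpr ⟨hia1, hia2, hi⟩))

  · -- backward direction
    intro hrhs
    have hne1 : ¬ (a - 1 = a) := by omega
    have haa : a = a := rfl
    rcases hrhs with hBd | hBd | hBd | ⟨i, hie, hi1, hia, hBd⟩ | ⟨i, hie, hi1, hia, hBd⟩ |
      ⟨i, j, hij, hje, hi1, hia, hj1, hja, hBd⟩ | ⟨i, hie, hia, hBd⟩ |
      ⟨i, hie, hi1, hia, hBd⟩ | hBd
    · have h4 : SOf e B (a - 1) = oneRunnerBeta [] 4 := by
        rw [hBd, SOf_display bd _ ha1e]; simp only [hbda1, if_neg hne1]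
      have h5 : SOf e B a = oneRunnerBeta [3, 1] 5 := by
        rw [hBd, SOf_display bd _ hae]; simp only [hbda, if_pos haa, eq_self_iff_true, if_true]
      rw [h4, h5]; decide
    · have h4 : SOf e B (a - 1) = oneRunnerBeta [] 4 := by
        rw [hBd, SOf_display bd _ ha1e]; simp only [hbda1, if_neg hne1]
      have h5 : SOf e B a = oneRunnerBeta [2, 2] 5 := by
        rw [hBd, SOf_display bd _ hae]; simp only [hbda, if_pos haa, eq_self_iff_true, if_true]
      rw [h4, h5]; decide
    · have h4 : SOf e B (a - 1) = oneRunnerBeta [] 4 := by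
        rw [hBd, SOf_display bd _ ha1e]; simp only [hbda1, if_neg hne1]
      have h5 : SOf e B a = oneRunnerBeta [2, 1, 1] 5 := by
        rw [hBd, SOf_display bd _ hae]; simp only [hbda, if_pos haa, eq_self_iff_true, if_true]
      rw [h4, h5]; decide
    · have hne2 : ¬ (a - 1 = i) := by omega
      have hne3 : ¬ (a = i) := by omega
      have h4 : SOf e B (a - 1) = oneRunnerBeta [] 4 := by
        rw [hBd, SOf_display bd _ ha1e]; simp only [hbda1, if_neg hne1, if_neg hne2]
      have h5 : SOf e B a = oneRunnerBeta [2, 1] 5 := by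
        rw [hBd, SOf_display bd _ hae]; simp only [hbda, if_pos haa, eq_self_iff_true, if_true]
      rw [h4, h5]; decide
    · have hne2 : ¬ (a - 1 = i) := by omega
      have h4 : SOf e B (a - 1) = oneRunnerBeta [] 4 := by
        rw [hBd, SOf_display bd _ ha1e]; simp only [hbda1, if_neg hne1, if_neg hne2]
      have h5 : SOf e B a = oneRunnerBeta [1, 1] 5 := by
        rw [hBd, SOf_display bd _ hae]; simp only [hbda, if_pos haa, eq_self_iff_true, if_true]
      rw [h4, h5]; decide
    · have hne2 : ¬ (a - 1 = i ∨ a - 1 = j) := by omega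
      have h4 : SOf e B (a - 1) = oneRunnerBeta [] 4 := by
        rw [hBd, SOf_display bd _ ha1e]; simp only [hbda1, if_neg hne1, if_neg hne2]
      have h5 : SOf e B a = oneRunnerBeta [1, 1] 5 := by
        rw [hBd, SOf_display bd _ hae]; simp only [hbda, if_pos haa, eq_self_iff_true, if_true]
      rw [h4, h5]; decide
    · have h5 : SOf e B a = oneRunnerBeta [1, 1, 1] 5 := by
        rw [hBd, SOf_display bd _ hae]; simp only [hbda, if_pos haa, eq_self_iff_true, if_true]
      by_cases hi : a - 1 = i
      · have h4 : SOf e B (a - 1) = oneRunnerBeta [1] 4 := by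
          rw [hBd, SOf_display bd _ ha1e]; simp only [hbda1, if_neg hne1, if_pos hi]
        rw [h4, h5]; decide
      · have h4 : SOf e B (a - 1) = oneRunnerBeta [] 4 := by
          rw [hBd, SOf_display bd _ ha1e]; simp only [hbda1, if_neg hne1, if_neg hi]
        rw [h4, h5]; decide
    · have hne2 : ¬ (a - 1 = i) := by omega
      have h4 : SOf e B (a - 1) = oneRunnerBeta [] 4 := by
        rw [hBd, SOf_display bd _ ha1e]; simp only [hbda1, if_neg hne1, if_neg hne2]
      have h5 : SOf e B a = oneRunnerBeta [1, 1] 5 := by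
        rw [hBd, SOf_display bd _ hae]; simp only [hbda, if_pos haa, eq_self_iff_true, if_true]
      rw [h4, h5]; decide
    · have h4 : SOf e B (a - 1) = oneRunnerBeta [] 4 := by
        rw [hBd, SOf_display bd _ ha1e]; simp only [hbda1, if_neg hne1]
      have h5 : SOf e B a = oneRunnerBeta [1, 1, 1, 1] 5 := by
        rw [hBd, SOf_display bd _ hae]; simp only [hbda, if_pos haa, eq_self_iff_true, if_true]
      rw [h4, h5]; decide
end
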